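/- arXiv:1705.01193 — 3 statements merged into one kernel-verified Lean document; each statement's English description precedes it below -/
import Mathlib

section
/- Assume ν(V) > 0. For every t ∈ (0, b⁻¹], the map f ↦ T(t)f is a bounded linear operator on L¹(Ω,μ) whose operator norm equals max(1, p+q); that is, ‖T(t)f‖_{L¹(Ω)} ≤ max(1, p+q) · ‖f‖_{L¹(Ω)} for all f ∈ L¹(Ω,μ), and for every ε > 0 there is f ∈ L¹(Ω,μ) with ‖f‖_{L¹(Ω)} = 1 and ‖T(t)f‖_{L¹(Ω)} > max(1, p+q) − ε. -/
open MeasureTheory Set Filter Topology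
open scoped ENNReal

/-- The measure `ℓ(·,v)` on `V` given by
`ℓ(dw,v) = p w v⁻¹ k(w,v) ν(dw) + q δ_v(dw)`. -/
noncomputable def ell (p q : ℝ) (k : ℝ → ℝ → ℝ) (ν : Measure ℝ) (V : Set ℝ) (v : ℝ) :
    Measure ℝ :=
  (ν.restrict V).withDensity (fun w => ENNReal.ofReal (p * w * v⁻¹ * k w v)) +
    (ENNReal.ofReal q) • Measure.dirac v

/-- The operator `T(t)` (for `t ∈ [0, b⁻¹]`):
`T(t)f(x,v) = f(x − tv, v)` if `x > tv`, and
`T(t)f(x,v) = ∫_V f(1 + x w v⁻¹ − t w, w) ℓ(dw,v)` if `x ≤ tv`. -/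
noncomputable def Tt (p q : ℝ) (k : ℝ → ℝ → ℝ) (ν : Measure ℝ) (V : Set ℝ) (t : ℝ)
    (f : ℝ × ℝ → ℝ) : ℝ × ℝ → ℝ :=
  fun z =>
    if t * z.2 < z.1 then f (z.1 - t * z.2, z.2)
    else ∫ w, f (1 + z.1 * w * z.2⁻¹ - t * w, w) ∂(ell p q k ν V z.2)

section
variable {a b p q : ℝ} {k : ℝ → ℝ → ℝ} {ν : Measure ℝ} {V : Set ℝ} {t : ℝ}

lemma lint_affine (m c : ℝ) (hm : 0 < m) (g : ℝ → ℝ≥0∞) (hg : Measurable g)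
    (s u : Set ℝ) (hu : MeasurableSet u) (hsu : ∀ x, x ∈ s ↔ m * x + c ∈ u) :
    ∫⁻ x in s, g (m * x + c) ∂volume = ENNReal.ofReal m⁻¹ * ∫⁻ y in u, g y ∂volume := by
  have hφ : Measurable fun x : ℝ => m * x + c := by fun_prop
  have hs : MeasurableSet s := by
    have : s = (fun x : ℝ => m * x + c) ⁻¹' u := by ext x; exact hsu x
    rw [this]; exact hφ hu
  have hmap : Measure.map (fun x : ℝ => m * x + c) volume = ENNReal.ofReal m⁻¹ • volume := by
    have h1 : (fun x : ℝ => m * x + c) = (fun x : ℝ => x + c) ∘ (fun x : ℝ => m * x) := rfl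
    rw [h1, ← Measure.map_map (by fun_prop) (by fun_prop),
      Real.map_volume_mul_left hm.ne', Measure.map_smul, map_add_right_eq_self,
      abs_of_pos (inv_pos.mpr hm)]
  have key : ∫⁻ x in s, g (m * x + c) ∂volume
      = ∫⁻ x, u.indicator g (m * x + c) ∂volume := by
    rw [← lintegral_indicator hs]
    congr 1
    ext x
    by_cases hx : x ∈ s
    · simp [indicator_of_mem hx, indicator_of_mem ((hsu x).1 hx)]
    · simp [indicator_of_notMem hx, indicator_of_notMem (fun h => hx ((hsu x).2 h))]
  rw [key, ← lintegral_map (hg.indicator hu) hφ, hmap, lintegral_smul_measure,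
    lintegral_indicator hu, smul_eq_mul]

lemma lint_affine' (m c : ℝ) (hm : 0 < m) (F : ℝ × ℝ → ℝ≥0∞) (hF : Measurable F)
    (v : ℝ) (s u : Set ℝ) (hu : MeasurableSet u) (hsu : ∀ x, x ∈ s ↔ m * x + c ∈ u) :
    ∫⁻ x in s, F (m * x + c, v) ∂volume
      = ENNReal.ofReal m⁻¹ * ∫⁻ y in u, F (y, v) ∂volume :=
  lint_affine m c hm (fun y => F (y, v)) (hF.comp (measurable_id.prodMk measurable_const))
    s u hu hsu

lemma lintegral_ell (hkm : Measurable (Function.uncurry k)) (v : ℝ)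
    {h : ℝ → ℝ≥0∞} (hh : Measurable h) :
    ∫⁻ w, h w ∂(ell p q k ν V v)
      = ∫⁻ w in V, ENNReal.ofReal (p * w * v⁻¹ * k w v) * h w ∂ν
        + ENNReal.ofReal q * h v := by
  have hd : Measurable fun w => ENNReal.ofReal (p * w * v⁻¹ * k w v) := by
    apply Measurable.ennreal_ofReal
    exact (measurable_const.mul measurable_id |>.mul measurable_const).mul
      (hkm.comp (measurable_id.prodMk measurable_const))
  rw [ell, lintegral_add_measure, lintegral_withDensity_eq_lintegral_mul _ hd hh,
    lintegral_smul_measure, lintegral_dirac' v hh]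
  rfl

noncomputable def Phi (p q : ℝ) (k : ℝ → ℝ → ℝ) (ν : Measure ℝ) (V : Set ℝ) (t : ℝ)
    (F : ℝ × ℝ → ℝ≥0∞) : ℝ × ℝ → ℝ≥0∞ :=
  fun z =>
    if t * z.2 < z.1 then F (z.1 - t * z.2, z.2)
    else ∫⁻ w, F (1 + z.1 * w * z.2⁻¹ - t * w, w) ∂(ell p q k ν V z.2)

lemma measurable_Phi [SigmaFinite ν] (hkm : Measurable (Function.uncurry k))
    {F : ℝ × ℝ → ℝ≥0∞} (hF : Measurable F) :
    Measurable (Phi p q k ν V t F) := by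
  have hcond : MeasurableSet {z : ℝ × ℝ | t * z.2 < z.1} :=
    measurableSet_lt (by fun_prop) measurable_fst
  have h1 : Measurable fun z : ℝ × ℝ => F (z.1 - t * z.2, z.2) :=
    hF.comp (by fun_prop)
  have h2 : Measurable fun z : ℝ × ℝ =>
      ∫⁻ w, F (1 + z.1 * w * z.2⁻¹ - t * w, w) ∂(ell p q k ν V z.2) := by
    have heq : (fun z : ℝ × ℝ =>
        ∫⁻ w, F (1 + z.1 * w * z.2⁻¹ - t * w, w) ∂(ell p q k ν V z.2))
        = fun z : ℝ × ℝ =>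
          (∫⁻ w in V, ENNReal.ofReal (p * w * z.2⁻¹ * k w z.2)
              * F (1 + z.1 * w * z.2⁻¹ - t * w, w) ∂ν)
            + ENNReal.ofReal q * F (1 + z.1 * z.2 * z.2⁻¹ - t * z.2, z.2) := by
      funext z
      exact lintegral_ell hkm z.2 (hF.comp (by fun_prop))
    rw [heq]
    apply Measurable.add
    · apply Measurable.lintegral_prod_right
        (f := fun (z : ℝ × ℝ) (w : ℝ) => ENNReal.ofReal (p * w * z.2⁻¹ * k w z.2)
          * F (1 + z.1 * w * z.2⁻¹ - t * w, w))
      apply Measurable.mul (by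
        apply Measurable.ennreal_ofReal
        have hkk : Measurable fun zw : (ℝ × ℝ) × ℝ => k zw.2 zw.1.2 :=
          hkm.comp (measurable_snd.prodMk (measurable_fst.snd))
        fun_prop)
      exact hF.comp (by fun_prop)
    · exact (hF.comp (by fun_prop)).const_mul _
  unfold Phi
  exact Measurable.ite hcond h1 h2

lemma measurable_J {F : ℝ × ℝ → ℝ≥0∞} (hF : Measurable F) (t : ℝ) :
    Measurable fun w : ℝ => ∫⁻ y in Ioc (1 - t*w) 1, F (y, w) ∂volume := by
  have heq : (fun w : ℝ => ∫⁻ y in Ioc (1 - t*w) 1, F (y, w) ∂volume)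
      = fun w : ℝ => ∫⁻ y, (if 1 - t*w < y ∧ y ≤ 1 then F (y, w) else 0) ∂volume := by
    funext w
    rw [← lintegral_indicator measurableSet_Ioc]
    congr 1; funext y; rw [Set.indicator_apply]; simp [mem_Ioc]
  rw [heq]
  apply Measurable.lintegral_prod_right
    (f := fun (w : ℝ) (y : ℝ) => if 1 - t*w < y ∧ y ≤ 1 then F (y, w) else 0)
  have hs : MeasurableSet {wy : ℝ × ℝ | 1 - t * wy.1 < wy.2 ∧ wy.2 ≤ 1} := by
    have : {wy : ℝ × ℝ | 1 - t * wy.1 < wy.2 ∧ wy.2 ≤ 1}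
        = {wy : ℝ × ℝ | 1 - t * wy.1 < wy.2} ∩ {wy : ℝ × ℝ | wy.2 ≤ 1} := rfl
    rw [this]
    exact (measurableSet_lt (by fun_prop) (by fun_prop)).inter
      (measurableSet_le (by fun_prop) (by fun_prop))
  exact Measurable.ite hs (hF.comp (by fun_prop)) measurable_const

lemma measurable_A {F : ℝ × ℝ → ℝ≥0∞} (hF : Measurable F) (t : ℝ) :
    Measurable fun v : ℝ => ∫⁻ x in Ioo 0 (1 - t*v), F (x, v) ∂volume := by
  have heq : (fun v : ℝ => ∫⁻ x in Ioo 0 (1 - t*v), F (x, v) ∂volume)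
      = fun v : ℝ => ∫⁻ x, (if 0 < x ∧ x < 1 - t*v then F (x, v) else 0) ∂volume := by
    funext v
    rw [← lintegral_indicator measurableSet_Ioo]
    congr 1; funext x; rw [Set.indicator_apply]; simp [mem_Ioo]
  rw [heq]
  apply Measurable.lintegral_prod_right
    (f := fun (v : ℝ) (x : ℝ) => if 0 < x ∧ x < 1 - t*v then F (x, v) else 0)
  have hs : MeasurableSet {vx : ℝ × ℝ | 0 < vx.2 ∧ vx.2 < 1 - t * vx.1} := by
    have : {vx : ℝ × ℝ | 0 < vx.2 ∧ vx.2 < 1 - t * vx.1}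
        = {vx : ℝ × ℝ | 0 < vx.2} ∩ {vx : ℝ × ℝ | vx.2 < 1 - t * vx.1} := rfl
    rw [this]
    exact (measurableSet_lt (by fun_prop) (by fun_prop)).inter
      (measurableSet_lt (by fun_prop) (by fun_prop))
  exact Measurable.ite hs (hF.comp (by fun_prop)) measurable_const

lemma inner_eq [SigmaFinite ν] (ha : 0 ≤ a) (hab : a < b) (hp : 0 ≤ p) (hq : 0 ≤ q)
    (hV : V ⊆ Ioo a b) (hVm : MeasurableSet V)
    (hkm : Measurable (Function.uncurry k)) (hknn : ∀ w v, 0 ≤ k w v)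
    (ht0 : 0 < t) (ht1 : t ≤ b⁻¹)
    {F : ℝ × ℝ → ℝ≥0∞} (hF : Measurable F) {v : ℝ} (hv : v ∈ V) :
    ∫⁻ x in Ioo 0 1, Phi p q k ν V t F (x, v) ∂volume
      = (ENNReal.ofReal p * ∫⁻ w in V, ENNReal.ofReal (k w v) *
            (∫⁻ y in Ioc (1 - t*w) 1, F (y, w) ∂volume) ∂ν
          + ENNReal.ofReal q * ∫⁻ y in Ioc (1 - t*v) 1, F (y, v) ∂volume)
        + ∫⁻ x in Ioo 0 (1 - t*v), F (x, v) ∂volume := by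
  have hb : 0 < b := ha.trans_lt hab
  have hv0 : 0 < v := ha.trans_lt (hV hv).1
  have hvb : v < b := (hV hv).2
  have htb : t * b ≤ 1 := by
    calc t * b ≤ b⁻¹ * b := mul_le_mul_of_nonneg_right ht1 hb.le
    _ = 1 := inv_mul_cancel₀ hb.ne'
  have htv0 : 0 < t * v := mul_pos ht0 hv0
  have htv1 : t * v < 1 := lt_of_lt_of_le (by nlinarith) htb
  have hdisj : Disjoint (Ioc 0 (t*v)) (Ioo (t*v) 1) := by
    rw [Set.disjoint_left]
    rintro x ⟨_, h1⟩ ⟨h2, _⟩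
    exact absurd h2 (not_lt.2 h1)
  rw [← Ioc_union_Ioo_eq_Ioo htv0.le htv1, lintegral_union measurableSet_Ioo hdisj]
  -- the transported (free-flow) piece
  have hIoo : ∫⁻ x in Ioo (t*v) 1, Phi p q k ν V t F (x, v) ∂volume
      = ∫⁻ x in Ioo 0 (1 - t*v), F (x, v) ∂volume := by
    have h1 : ∀ᵐ x ∂volume, x ∈ Ioo (t*v) 1 →
        Phi p q k ν V t F (x, v) = F (1 * x + -(t*v), v) := by
      refine ae_of_all _ fun x hx => ?_
      simp only [Phi]
      rw [if_pos hx.1]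
      simp only [one_mul, ← sub_eq_add_neg]
    rw [setLIntegral_congr_fun_ae measurableSet_Ioo h1,
      lint_affine' 1 (-(t*v)) one_pos F hF v (Ioo (t*v) 1) (Ioo 0 (1 - t*v)) measurableSet_Ioo
        (by intro x; simp only [mem_Ioo, one_mul]; constructor <;>
          (intro h; constructor <;> linarith [h.1, h.2])) ]
    simp
  rw [hIoo]
  congr 1
  -- boundary piece
  have h2 : ∀ᵐ x ∂volume, x ∈ Ioc 0 (t*v) →
      Phi p q k ν V t F (x, v)
        = (∫⁻ w in V, ENNReal.ofReal (p * w * v⁻¹ * k w v)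
              * F (1 + x * w * v⁻¹ - t * w, w) ∂ν)
          + ENNReal.ofReal q * F (1 * x + (1 - t*v), v) := by
    refine ae_of_all _ fun x hx => ?_
    simp only [Phi]
    have hxv : 1 + x * v * v⁻¹ - t * v = 1 * x + (1 - t * v) := by
      field_simp
      ring
    rw [if_neg (not_lt.2 hx.2),
      lintegral_ell (h := fun w => F (1 + x * w * v⁻¹ - t * w, w)) hkm v
        (hF.comp (by fun_prop)), hxv]
  rw [setLIntegral_congr_fun_ae measurableSet_Ioc h2]
  have hQm : Measurable fun x : ℝ => ENNReal.ofReal q * F (1 * x + (1 - t*v), v) :=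
    (hF.comp (by fun_prop)).const_mul _
  rw [lintegral_add_right _ hQm]
  congr 1
  -- p-part
  · have hGm : AEMeasurable (Function.uncurry fun (x : ℝ) (w : ℝ) =>
        ENNReal.ofReal (p * w * v⁻¹ * k w v) * F (1 + x * w * v⁻¹ - t * w, w))
        ((volume.restrict (Ioc 0 (t*v))).prod (ν.restrict V)) := by
      apply Measurable.aemeasurable
      apply Measurable.mul
      · apply Measurable.ennreal_ofReal
        have hkk : Measurable fun xw : ℝ × ℝ => k xw.2 v :=
          hkm.comp (measurable_snd.prodMk measurable_const)
        fun_prop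
      · exact hF.comp (by fun_prop)
    rw [lintegral_lintegral_swap hGm,
      ← lintegral_const_mul' (ENNReal.ofReal p) _ ENNReal.ofReal_ne_top]
    refine setLIntegral_congr_fun_ae hVm (ae_of_all _ fun w hw => ?_)
    · have hw0 : 0 < w := ha.trans_lt (hV hw).1
      have hm : 0 < w * v⁻¹ := mul_pos hw0 (inv_pos.mpr hv0)
      have harg : ∀ x : ℝ, (1 + x * w * v⁻¹ - t * w) = (w * v⁻¹) * x + (1 - t * w) := by
        intro x; ring
      have hcongr : ∫⁻ x in Ioc 0 (t*v),
          ENNReal.ofReal (p * w * v⁻¹ * k w v) * F (1 + x * w * v⁻¹ - t * w, w) ∂volume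
          = ENNReal.ofReal (p * w * v⁻¹ * k w v)
            * ∫⁻ x in Ioc 0 (t*v), F ((w * v⁻¹) * x + (1 - t * w), w) ∂volume := by
        rw [lintegral_const_mul' _ _ ENNReal.ofReal_ne_top]
        congr 1
        refine setLIntegral_congr_fun_ae measurableSet_Ioc (ae_of_all _ fun x hx => ?_)
        rw [harg x]
      rw [hcongr]
      have hmtv : w * v⁻¹ * (t * v) = t * w := by field_simp
      rw [lint_affine' (w * v⁻¹) (1 - t*w) hm F hF w (Ioc 0 (t*v)) (Ioc (1 - t*w) 1) measurableSet_Ioc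
        (by
          intro x
          simp only [mem_Ioc]
          constructor
          · rintro ⟨h0, h1⟩
            constructor
            · nlinarith [mul_pos hm h0]
            · nlinarith [mul_le_mul_of_nonneg_left h1 hm.le]
          · rintro ⟨h0, h1⟩
            constructor
            · nlinarith
            · nlinarith [mul_le_mul_of_nonneg_left (le_of_lt hm) (le_of_lt hm)] )]
      rw [← mul_assoc, ← ENNReal.ofReal_mul
          (mul_nonneg (mul_nonneg (mul_nonneg hp hw0.le) (inv_nonneg.mpr hv0.le)) (hknn w v)),
        show (p * w * v⁻¹ * k w v) * (w * v⁻¹)⁻¹ = p * k w v by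
          rw [mul_inv, inv_inv]
          field_simp,
        ENNReal.ofReal_mul hp, mul_assoc]
  -- q-part
  · rw [lintegral_const_mul' _ _ ENNReal.ofReal_ne_top]
    congr 1
    rw [lint_affine' 1 (1 - t*v) one_pos F hF v (Ioc 0 (t*v)) (Ioc (1 - t*v) 1) measurableSet_Ioc
      (by intro x; simp only [mem_Ioc, one_mul]; constructor <;>
        (intro h; constructor <;> linarith [h.1, h.2]))]
    simp

lemma lint_k_one (hknn : ∀ w v, 0 ≤ k w v) (hk1 : ∀ w ∈ V, ∫ v in V, k w v ∂ν = 1)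
    {w : ℝ} (hw : w ∈ V) : ∫⁻ v in V, ENNReal.ofReal (k w v) ∂ν = 1 := by
  have hInt : Integrable (fun v => k w v) (ν.restrict V) := by
    by_contra h
    have h2 := hk1 w hw
    rw [integral_undef h] at h2
    norm_num at h2
  rw [← ofReal_integral_eq_lintegral_ofReal hInt (ae_of_all _ fun v => hknn w v),
    hk1 w hw, ENNReal.ofReal_one]

lemma master [SigmaFinite ν] (ha : 0 ≤ a) (hab : a < b) (hp : 0 ≤ p) (hq : 0 ≤ q)
    (hV : V ⊆ Ioo a b) (hVm : MeasurableSet V)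
    (hkm : Measurable (Function.uncurry k)) (hknn : ∀ w v, 0 ≤ k w v)
    (hk1 : ∀ w ∈ V, ∫ v in V, k w v ∂ν = 1)
    (ht0 : 0 < t) (ht1 : t ≤ b⁻¹)
    {F : ℝ × ℝ → ℝ≥0∞} (hF : Measurable F) :
    ∫⁻ z in Ioo (0:ℝ) 1 ×ˢ V, Phi p q k ν V t F z ∂(volume.prod ν)
      = (∫⁻ v in V, ∫⁻ x in Ioo 0 (1 - t*v), F (x, v) ∂volume ∂ν)
        + ENNReal.ofReal (p + q)
          * ∫⁻ w in V, ∫⁻ y in Ioc (1 - t*w) 1, F (y, w) ∂volume ∂ν := by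
  have hPhi := measurable_Phi (p := p) (q := q) (ν := ν) (V := V) (t := t) hkm hF
  rw [← Measure.prod_restrict, lintegral_prod_symm _ hPhi.aemeasurable]
  rw [setLIntegral_congr_fun_ae hVm
    (ae_of_all _ fun v hv => inner_eq ha hab hp hq hV hVm hkm hknn ht0 ht1 hF hv)]
  have hJm : Measurable fun w : ℝ => ∫⁻ y in Ioc (1 - t*w) 1, F (y, w) ∂volume :=
    measurable_J hF t
  have hAm : Measurable fun v : ℝ => ∫⁻ x in Ioo 0 (1 - t*v), F (x, v) ∂volume :=
    measurable_A hF t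
  rw [lintegral_add_right _ hAm, lintegral_add_right _ (hJm.const_mul _),
    lintegral_const_mul' (ENNReal.ofReal p) _ ENNReal.ofReal_ne_top,
    lintegral_const_mul' (ENNReal.ofReal q) _ ENNReal.ofReal_ne_top]
  have hKswap : ∫⁻ v in V, ∫⁻ w in V, ENNReal.ofReal (k w v)
        * (∫⁻ y in Ioc (1 - t*w) 1, F (y, w) ∂volume) ∂ν ∂ν
      = ∫⁻ w in V, ∫⁻ y in Ioc (1 - t*w) 1, F (y, w) ∂volume ∂ν := by
    have hm : AEMeasurable (Function.uncurry fun (v w : ℝ) => ENNReal.ofReal (k w v)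
        * (∫⁻ y in Ioc (1 - t*w) 1, F (y, w) ∂volume))
        ((ν.restrict V).prod (ν.restrict V)) := by
      apply Measurable.aemeasurable
      exact ((hkm.comp (measurable_snd.prodMk measurable_fst)).ennreal_ofReal).mul
        (hJm.comp measurable_snd)
    rw [lintegral_lintegral_swap hm]
    refine setLIntegral_congr_fun_ae hVm (ae_of_all _ fun w hw => ?_)
    have hkwm : Measurable fun v : ℝ => ENNReal.ofReal (k w v) :=
      (hkm.comp (measurable_const.prodMk measurable_id)).ennreal_ofReal
    rw [lintegral_mul_const (f := fun v : ℝ => ENNReal.ofReal (k w v)) _ hkwm,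
      lint_k_one hknn hk1 hw, one_mul]
  rw [hKswap, ENNReal.ofReal_add hp hq, add_mul, add_comm]

lemma master_le [SigmaFinite ν] (ha : 0 ≤ a) (hab : a < b) (hp : 0 ≤ p) (hq : 0 ≤ q)
    (hV : V ⊆ Ioo a b) (hVm : MeasurableSet V)
    (hkm : Measurable (Function.uncurry k)) (hknn : ∀ w v, 0 ≤ k w v)
    (hk1 : ∀ w ∈ V, ∫ v in V, k w v ∂ν = 1)
    (ht0 : 0 < t) (ht1 : t ≤ b⁻¹)
    {F : ℝ × ℝ → ℝ≥0∞} (hF : Measurable F) :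
    ∫⁻ z in Ioo (0:ℝ) 1 ×ˢ V, Phi p q k ν V t F z ∂(volume.prod ν)
      ≤ ENNReal.ofReal (max 1 (p + q))
        * ∫⁻ z in Ioo (0:ℝ) 1 ×ˢ V, F z ∂(volume.prod ν) := by
  rw [master ha hab hp hq hV hVm hkm hknn hk1 ht0 ht1 hF]
  set M := ENNReal.ofReal (max 1 (p + q)) with hM
  have h1M : (1:ℝ≥0∞) ≤ M := by
    rw [hM, ← ENNReal.ofReal_one]
    exact ENNReal.ofReal_le_ofReal (le_max_left _ _)
  have hpqM : ENNReal.ofReal (p + q) ≤ M := ENNReal.ofReal_le_ofReal (le_max_right _ _)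
  have key : (∫⁻ v in V, ∫⁻ x in Ioo 0 (1 - t*v), F (x, v) ∂volume ∂ν)
      + (∫⁻ w in V, ∫⁻ y in Ioc (1 - t*w) 1, F (y, w) ∂volume ∂ν)
      ≤ ∫⁻ z in Ioo (0:ℝ) 1 ×ˢ V, F z ∂(volume.prod ν) := by
    rw [← lintegral_add_left (measurable_A hF t)]
    have hend : ∫⁻ z in Ioo (0:ℝ) 1 ×ˢ V, F z ∂(volume.prod ν)
        = ∫⁻ v in V, ∫⁻ x in Ioo 0 1, F (x, v) ∂volume ∂ν := by
      rw [← Measure.prod_restrict, lintegral_prod_symm _ hF.aemeasurable]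
    rw [hend]
    have hBig : Measurable fun v : ℝ => ∫⁻ x in Ioo 0 1, F (x, v) ∂volume := by
      have := measurable_A hF 0
      simpa using this
    refine setLIntegral_mono hBig fun v hv => ?_
    have hb : 0 < b := ha.trans_lt hab
    have hv0 : 0 < v := ha.trans_lt (hV hv).1
    have htv0 : 0 < t * v := mul_pos ht0 hv0
    have htv1 : t * v < 1 := by
      have : t * v < t * b := by nlinarith [(hV hv).2]
      calc t * v < t * b := this
      _ ≤ b⁻¹ * b := mul_le_mul_of_nonneg_right ht1 hb.le
      _ = 1 := inv_mul_cancel₀ hb.ne'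
    have hdisj : Disjoint (Ioo (0:ℝ) (1 - t*v)) (Ioc (1 - t*v) 1) := by
      rw [Set.disjoint_left]
      rintro x ⟨_, h1⟩ ⟨h2, _⟩
      exact absurd h2 (not_lt.2 h1.le)
    rw [← lintegral_union measurableSet_Ioc hdisj]
    have hsub : Ioo (0:ℝ) (1 - t*v) ∪ Ioc (1 - t*v) 1 ⊆ Ioc 0 1 := by
      rintro x (⟨h0, h1⟩ | ⟨h0, h1⟩)
      · exact ⟨h0, by linarith⟩
      · exact ⟨by linarith, h1⟩
    calc ∫⁻ x in Ioo (0:ℝ) (1 - t*v) ∪ Ioc (1 - t*v) 1, F (x, v) ∂volume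
        ≤ ∫⁻ x in Ioc (0:ℝ) 1, F (x, v) ∂volume := lintegral_mono_set hsub
      _ = ∫⁻ x in Ioo (0:ℝ) 1, F (x, v) ∂volume := by
          rw [Measure.restrict_congr_set Ioo_ae_eq_Ioc.symm]
  calc (∫⁻ v in V, ∫⁻ x in Ioo 0 (1 - t*v), F (x, v) ∂volume ∂ν)
        + ENNReal.ofReal (p + q)
          * ∫⁻ w in V, ∫⁻ y in Ioc (1 - t*w) 1, F (y, w) ∂volume ∂ν
      ≤ M * (∫⁻ v in V, ∫⁻ x in Ioo 0 (1 - t*v), F (x, v) ∂volume ∂ν)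
        + M * ∫⁻ w in V, ∫⁻ y in Ioc (1 - t*w) 1, F (y, w) ∂volume ∂ν := by
        gcongr
        · exact le_mul_of_one_le_left' h1M
    _ = M * ((∫⁻ v in V, ∫⁻ x in Ioo 0 (1 - t*v), F (x, v) ∂volume ∂ν)
        + ∫⁻ w in V, ∫⁻ y in Ioc (1 - t*w) 1, F (y, w) ∂volume ∂ν) := (mul_add _ _ _).symm
    _ ≤ M * ∫⁻ z in Ioo (0:ℝ) 1 ×ˢ V, F z ∂(volume.prod ν) := mul_le_mul_right key M

lemma part1 [SigmaFinite ν] (ha : 0 ≤ a) (hab : a < b) (hp : 0 ≤ p) (hq : 0 ≤ q)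
    (hV : V ⊆ Ioo a b) (hVm : MeasurableSet V)
    (hkm : Measurable (Function.uncurry k)) (hknn : ∀ w v, 0 ≤ k w v)
    (hk1 : ∀ w ∈ V, ∫ v in V, k w v ∂ν = 1)
    (ht0 : 0 < t) (ht1 : t ≤ b⁻¹)
    (f : ℝ × ℝ → ℝ) (hf : IntegrableOn f (Ioo (0:ℝ) 1 ×ˢ V) (volume.prod ν)) :
    ∫ z in Ioo (0:ℝ) 1 ×ˢ V, |Tt p q k ν V t f z| ∂(volume.prod ν)
      ≤ max 1 (p + q) * ∫ z in Ioo (0:ℝ) 1 ×ˢ V, |f z| ∂(volume.prod ν) := by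
  have hmax0 : (0:ℝ) ≤ max 1 (p + q) := le_trans zero_le_one (le_max_left _ _)
  by_cases hI : Integrable (fun z => |Tt p q k ν V t f z|)
      ((volume.prod ν).restrict (Ioo (0:ℝ) 1 ×ˢ V))
  swap
  · rw [integral_undef hI]
    exact mul_nonneg hmax0 (integral_nonneg fun z => abs_nonneg _)
  have hgm : Measurable (hf.aemeasurable.mk f) := hf.aemeasurable.measurable_mk
  set g := hf.aemeasurable.mk f with hg
  have hfg : f =ᶠ[ae ((volume.prod ν).restrict (Ioo (0:ℝ) 1 ×ˢ V))] g :=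
    hf.aemeasurable.ae_eq_mk
  set N := toMeasurable ((volume.prod ν).restrict (Ioo (0:ℝ) 1 ×ˢ V)) {z | f z ≠ g z} with hN
  have hNm : MeasurableSet N := measurableSet_toMeasurable _ _
  have hNnull : (volume.prod ν).restrict (Ioo (0:ℝ) 1 ×ˢ V) N = 0 := by
    rw [hN, measure_toMeasurable]
    exact ae_iff.1 hfg
  have hsubN : {z | f z ≠ g z} ⊆ N := subset_toMeasurable _ _
  set F₀ : ℝ × ℝ → ℝ≥0∞ := N.indicator (fun _ => 1) with hF₀
  have hF₀m : Measurable F₀ := measurable_const.indicator hNm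
  have hPhiF₀ : ∫⁻ z in Ioo (0:ℝ) 1 ×ˢ V, Phi p q k ν V t F₀ z ∂(volume.prod ν) = 0 := by
    refine le_antisymm ?_ zero_le
    calc ∫⁻ z in Ioo (0:ℝ) 1 ×ˢ V, Phi p q k ν V t F₀ z ∂(volume.prod ν)
        ≤ ENNReal.ofReal (max 1 (p + q))
          * ∫⁻ z in Ioo (0:ℝ) 1 ×ˢ V, F₀ z ∂(volume.prod ν) :=
        master_le ha hab hp hq hV hVm hkm hknn hk1 ht0 ht1 hF₀m
      _ = 0 := by
        rw [hF₀, lintegral_indicator hNm]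
        simp only [lintegral_one, Measure.restrict_apply_univ]
        rw [hNnull, mul_zero]
  have hae : ∀ᵐ z ∂((volume.prod ν).restrict (Ioo (0:ℝ) 1 ×ˢ V)),
      Phi p q k ν V t F₀ z = 0 := by
    have h4 := (lintegral_eq_zero_iff
      (μ := (volume.prod ν).restrict (Ioo (0:ℝ) 1 ×ˢ V))
      (measurable_Phi hkm hF₀m)).1 hPhiF₀
    filter_upwards [h4] with z hz
    simpa using hz
  set G : ℝ × ℝ → ℝ≥0∞ := fun z => ENNReal.ofReal |g z| with hG
  have hGm : Measurable G := hgm.abs.ennreal_ofReal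
  have hbound : ∀ᵐ z ∂((volume.prod ν).restrict (Ioo (0:ℝ) 1 ×ˢ V)),
      ENNReal.ofReal |Tt p q k ν V t f z| ≤ Phi p q k ν V t G z := by
    filter_upwards [hae] with z hz
    by_cases hc : t * z.2 < z.1
    · have h0 : F₀ (z.1 - t * z.2, z.2) = 0 := by simpa [Phi, hc] using hz
      have hfg' : f (z.1 - t * z.2, z.2) = g (z.1 - t * z.2, z.2) := by
        by_contra hne
        have hmem : (z.1 - t * z.2, z.2) ∈ N := hsubN hne
        rw [hF₀] at h0
        simp [indicator_of_mem hmem] at h0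
      simp only [Tt, Phi, if_pos hc, hfg', hG]
      exact le_refl _
    · have h0 : ∫⁻ w, F₀ (1 + z.1 * w * z.2⁻¹ - t * w, w) ∂(ell p q k ν V z.2) = 0 := by
        simpa [Phi, hc] using hz
      have haew : ∀ᵐ w ∂(ell p q k ν V z.2),
          f (1 + z.1 * w * z.2⁻¹ - t * w, w) = g (1 + z.1 * w * z.2⁻¹ - t * w, w) := by
        have h1 := (lintegral_eq_zero_iff (hF₀m.comp
          (show Measurable fun w : ℝ => (1 + z.1 * w * z.2⁻¹ - t * w, w) by fun_prop))).1 h0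
        filter_upwards [h1] with w hw
        by_contra hne
        have hmem : (1 + z.1 * w * z.2⁻¹ - t * w, w) ∈ N := hsubN hne
        rw [hF₀] at hw
        simp [indicator_of_mem hmem] at hw
      have hTg : Tt p q k ν V t f z
          = ∫ w, g (1 + z.1 * w * z.2⁻¹ - t * w, w) ∂(ell p q k ν V z.2) := by
        simp only [Tt, if_neg hc]
        exact integral_congr_ae haew
      rw [hTg]
      simp only [Phi, if_neg hc]
      calc ENNReal.ofReal |∫ w, g (1 + z.1 * w * z.2⁻¹ - t * w, w) ∂(ell p q k ν V z.2)|
          = ↑‖∫ w, g (1 + z.1 * w * z.2⁻¹ - t * w, w) ∂(ell p q k ν V z.2)‖₊ :=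
            (Real.enorm_eq_ofReal_abs _).symm
        _ ≤ ∫⁻ w, ↑‖g (1 + z.1 * w * z.2⁻¹ - t * w, w)‖₊ ∂(ell p q k ν V z.2) :=
            enorm_integral_le_lintegral_enorm _
        _ = ∫⁻ w, G (1 + z.1 * w * z.2⁻¹ - t * w, w) ∂(ell p q k ν V z.2) :=
            lintegral_congr fun w => Real.enorm_eq_ofReal_abs _
  -- now the chain
  rw [integral_eq_lintegral_of_nonneg_ae (ae_of_all _ fun z => abs_nonneg _)
      hI.aestronglyMeasurable,
    integral_eq_lintegral_of_nonneg_ae (ae_of_all _ fun z => abs_nonneg _)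
      hf.abs.aestronglyMeasurable]
  have hfin : ∫⁻ z, ENNReal.ofReal |f z| ∂((volume.prod ν).restrict (Ioo (0:ℝ) 1 ×ˢ V)) ≠ ⊤ := by
    have h2 := hf.abs.hasFiniteIntegral
    rw [HasFiniteIntegral] at h2
    have h3 : ∀ z : ℝ × ℝ, ‖|f z|‖ₑ = ENNReal.ofReal |f z| := by
      intro z
      rw [Real.enorm_eq_ofReal_abs, abs_abs]
    rw [lintegral_congr h3] at h2
    exact h2.ne
  have hchain : ∫⁻ z, ENNReal.ofReal |Tt p q k ν V t f z|
        ∂((volume.prod ν).restrict (Ioo (0:ℝ) 1 ×ˢ V))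
      ≤ ENNReal.ofReal (max 1 (p + q))
        * ∫⁻ z, ENNReal.ofReal |f z| ∂((volume.prod ν).restrict (Ioo (0:ℝ) 1 ×ˢ V)) := by
    calc ∫⁻ z, ENNReal.ofReal |Tt p q k ν V t f z|
          ∂((volume.prod ν).restrict (Ioo (0:ℝ) 1 ×ˢ V))
        ≤ ∫⁻ z, Phi p q k ν V t G z ∂((volume.prod ν).restrict (Ioo (0:ℝ) 1 ×ˢ V)) :=
          lintegral_mono_ae hbound
      _ ≤ ENNReal.ofReal (max 1 (p + q))
          * ∫⁻ z in Ioo (0:ℝ) 1 ×ˢ V, G z ∂(volume.prod ν) :=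
          master_le ha hab hp hq hV hVm hkm hknn hk1 ht0 ht1 hGm
      _ = ENNReal.ofReal (max 1 (p + q))
          * ∫⁻ z, ENNReal.ofReal |f z| ∂((volume.prod ν).restrict (Ioo (0:ℝ) 1 ×ˢ V)) := by
          congr 1
          refine lintegral_congr_ae ?_
          filter_upwards [hfg] with z hz
          rw [hG, hz]
  calc (∫⁻ z, ENNReal.ofReal |Tt p q k ν V t f z|
        ∂((volume.prod ν).restrict (Ioo (0:ℝ) 1 ×ˢ V))).toReal
      ≤ (ENNReal.ofReal (max 1 (p + q))
        * ∫⁻ z, ENNReal.ofReal |f z|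
          ∂((volume.prod ν).restrict (Ioo (0:ℝ) 1 ×ˢ V))).toReal :=
        ENNReal.toReal_mono (ENNReal.mul_ne_top ENNReal.ofReal_ne_top hfin) hchain
    _ = max 1 (p + q) * (∫⁻ z, ENNReal.ofReal |f z|
          ∂((volume.prod ν).restrict (Ioo (0:ℝ) 1 ×ˢ V))).toReal := by
        rw [ENNReal.toReal_mul, ENNReal.toReal_ofReal hmax0]

lemma TtRepr [SigmaFinite ν] (hkm : Measurable (Function.uncurry k))
    (f : ℝ × ℝ → ℝ) (hfm : Measurable f) (hf0 : ∀ z, 0 ≤ f z)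
    (hfin : ∫⁻ z in Ioo (0:ℝ) 1 ×ˢ V,
        Phi p q k ν V t (fun z => ENNReal.ofReal (f z)) z ∂(volume.prod ν) ≠ ⊤) :
    ∫ z in Ioo (0:ℝ) 1 ×ˢ V, |Tt p q k ν V t f z| ∂(volume.prod ν)
      = (∫⁻ z in Ioo (0:ℝ) 1 ×ˢ V,
          Phi p q k ν V t (fun z => ENNReal.ofReal (f z)) z ∂(volume.prod ν)).toReal := by
  set F : ℝ × ℝ → ℝ≥0∞ := fun z => ENNReal.ofReal (f z) with hF
  have hFm : Measurable F := hfm.ennreal_ofReal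
  have haefin : ∀ᵐ z ∂((volume.prod ν).restrict (Ioo (0:ℝ) 1 ×ˢ V)),
      Phi p q k ν V t F z < ⊤ := ae_lt_top (measurable_Phi hkm hFm) hfin
  have haeeq : ∀ᵐ z ∂((volume.prod ν).restrict (Ioo (0:ℝ) 1 ×ˢ V)),
      |Tt p q k ν V t f z| = (Phi p q k ν V t F z).toReal := by
    refine ae_of_all _ fun z => ?_
    by_cases hc : t * z.2 < z.1
    · simp only [Tt, Phi, if_pos hc, hF]
      rw [abs_of_nonneg (hf0 _), ENNReal.toReal_ofReal (hf0 _)]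
    · simp only [Tt, Phi, if_neg hc]
      have hγm : Measurable fun w : ℝ => f (1 + z.1 * w * z.2⁻¹ - t * w, w) :=
        hfm.comp (by fun_prop)
      rw [integral_eq_lintegral_of_nonneg_ae (ae_of_all _ fun w => hf0 _)
        hγm.aestronglyMeasurable]
      rw [abs_of_nonneg ENNReal.toReal_nonneg]
  rw [integral_congr_ae haeeq,
    integral_toReal (measurable_Phi hkm hFm).aemeasurable haefin]

lemma helper1 {W : Set ℝ} {u s c : ℝ} (v : ℝ) (T : Set ℝ) (hTm : MeasurableSet T) :
    ∫⁻ x in T, ((Ioo u s ×ˢ W).indicator (fun _ => ENNReal.ofReal c)) (x, v) ∂volume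
      = W.indicator (fun _ => ENNReal.ofReal c * volume (Ioo u s ∩ T)) v := by
  by_cases hv : v ∈ W
  · rw [indicator_of_mem hv]
    have hpt : ∀ x : ℝ, ((Ioo u s ×ˢ W).indicator (fun _ => ENNReal.ofReal c)) (x, v)
        = (Ioo u s).indicator (fun _ => ENNReal.ofReal c) x := by
      intro x
      by_cases hx : x ∈ Ioo u s
      · rw [indicator_of_mem (mem_prod.2 ⟨hx, hv⟩), indicator_of_mem hx]
      · rw [indicator_of_notMem (fun h => hx (mem_prod.1 h).1), indicator_of_notMem hx]
    rw [lintegral_congr hpt, lintegral_indicator measurableSet_Ioo, setLIntegral_const,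
      Measure.restrict_apply measurableSet_Ioo]
  · rw [indicator_of_notMem hv]
    have hpt : ∀ x : ℝ, ((Ioo u s ×ˢ W).indicator (fun _ => ENNReal.ofReal c)) (x, v)
        = 0 := by
      intro x
      exact indicator_of_notMem (fun h => hv (mem_prod.1 h).2) _
    rw [lintegral_congr hpt, lintegral_zero]

lemma helper2 {W : Set ℝ} (hWm : MeasurableSet W) (hWV : W ⊆ V) (e : ℝ≥0∞) :
    ∫⁻ v in V, W.indicator (fun _ => e) v ∂ν = e * ν W := by
  rw [lintegral_indicator hWm, setLIntegral_const,
    Measure.restrict_apply hWm, inter_eq_self_of_subset_left hWV]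

lemma indicator_stuff [SigmaFinite ν] {W : Set ℝ} (hWm : MeasurableSet W) (hWV : W ⊆ V)
    (hWfin : ν W ≠ ⊤) {u s c : ℝ} (h0u : 0 ≤ u) (hus : u < s) (hs1 : s ≤ 1) (hc : 0 ≤ c) :
    IntegrableOn ((Ioo u s ×ˢ W).indicator fun _ => c) (Ioo (0:ℝ) 1 ×ˢ V) (volume.prod ν)
    ∧ ∫ z in Ioo (0:ℝ) 1 ×ˢ V, |((Ioo u s ×ˢ W).indicator fun _ => c) z| ∂(volume.prod ν)
        = c * ((s - u) * (ν W).toReal) := by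
  have hAm : MeasurableSet (Ioo u s ×ˢ W) := measurableSet_Ioo.prod hWm
  have hμA : (volume.prod ν) (Ioo u s ×ˢ W) = ENNReal.ofReal (s - u) * ν W := by
    rw [Measure.prod_prod, Real.volume_Ioo]
  have hμAfin : (volume.prod ν) (Ioo u s ×ˢ W) ≠ ⊤ := by
    rw [hμA]
    exact ENNReal.mul_ne_top ENNReal.ofReal_ne_top hWfin
  have hint : Integrable ((Ioo u s ×ˢ W).indicator fun _ => c) (volume.prod ν) := by
    refine (integrable_indicator_iff hAm).2 ?_
    exact integrableOn_const hμAfin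
  refine ⟨hint.integrableOn, ?_⟩
  have habs : ∀ z : ℝ × ℝ, |((Ioo u s ×ˢ W).indicator fun _ => c) z|
      = ((Ioo u s ×ˢ W).indicator fun _ => c) z :=
    fun z => abs_of_nonneg (indicator_nonneg (fun _ _ => hc) z)
  rw [integral_congr_ae (ae_of_all _ habs)]
  have hsub : Ioo u s ×ˢ W ⊆ Ioo (0:ℝ) 1 ×ˢ V := by
    refine prod_mono (fun x hx => ?_) hWV
    exact ⟨lt_of_le_of_lt h0u hx.1, lt_of_lt_of_le hx.2 hs1⟩
  rw [integral_indicator hAm, Measure.restrict_restrict hAm,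
    inter_eq_self_of_subset_left hsub, setIntegral_const, measureReal_def, hμA, ENNReal.toReal_mul,
    ENNReal.toReal_ofReal (by linarith)]
  rw [smul_eq_mul]
  ring

lemma exists_W [SigmaFinite ν] (hab : a < b) (hV : V ⊆ Ioo a b) (hVm : MeasurableSet V)
    (hνV : 0 < ν V) :
    ∃ a' b' : ℝ, ∃ W : Set ℝ, a < a' ∧ a' ≤ b' ∧ b' < b ∧ MeasurableSet W ∧ W ⊆ V ∧
      W ⊆ Icc a' b' ∧ 0 < ν W ∧ ν W < ⊤ := by
  set E : ℕ → Set ℝ := fun n => V ∩ Icc (a + 1/(n+1)) (b - 1/(n+1)) with hE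
  have hcover : V ⊆ ⋃ n, E n := by
    intro v hv
    obtain ⟨hav, hvb⟩ := hV hv
    obtain ⟨n₁, hn₁⟩ := exists_nat_one_div_lt (sub_pos.2 hav)
    obtain ⟨n₂, hn₂⟩ := exists_nat_one_div_lt (sub_pos.2 hvb)
    refine mem_iUnion.2 ⟨n₁ + n₂, hv, ?_, ?_⟩
    · have h1 : 1/((n₁+n₂ : ℕ)+1:ℝ) ≤ 1/((n₁:ℝ)+1) := by
        apply one_div_le_one_div_of_le (by positivity)
        push_cast
        linarith [Nat.cast_nonneg (α := ℝ) n₂]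
      linarith
    · have h1 : 1/((n₁+n₂ : ℕ)+1:ℝ) ≤ 1/((n₂:ℝ)+1) := by
        apply one_div_le_one_div_of_le (by positivity)
        push_cast
        linarith [Nat.cast_nonneg (α := ℝ) n₁]
      linarith
  have hex : ∃ n, ν (E n) ≠ 0 := by
    by_contra h
    push_neg at h
    have h0 : ν (⋃ n, E n) = 0 := measure_iUnion_null h
    have h1 : ν V = 0 := le_antisymm (le_trans (measure_mono hcover) h0.le) zero_le
    exact hνV.ne' h1
  obtain ⟨n, hn⟩ := hex
  have hEm : MeasurableSet (E n) := hVm.inter measurableSet_Icc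
  obtain ⟨W, hWm, hWE, hW0, hWtop⟩ :=
    Measure.exists_subset_measure_lt_top hEm (pos_iff_ne_zero.2 hn)
  have hpos : (0:ℝ) < 1/((n:ℝ)+1) := by positivity
  have hne : (E n).Nonempty := nonempty_of_measure_ne_zero hn
  obtain ⟨x, hx⟩ := hne
  refine ⟨a + 1/(n+1), b - 1/(n+1), W, by linarith, by linarith [hx.2.1, hx.2.2], by linarith,
    hWm, fun y hy => (hWE hy).1, fun y hy => (hWE hy).2, hW0, hWtop⟩

lemma phi_ind_value [SigmaFinite ν] (ha : 0 ≤ a) (hab : a < b) (hp : 0 ≤ p) (hq : 0 ≤ q)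
    (hV : V ⊆ Ioo a b) (hVm : MeasurableSet V)
    (hkm : Measurable (Function.uncurry k)) (hknn : ∀ w v, 0 ≤ k w v)
    (hk1 : ∀ w ∈ V, ∫ v in V, k w v ∂ν = 1)
    (ht0 : 0 < t) (ht1 : t ≤ b⁻¹)
    {W : Set ℝ} (hWm : MeasurableSet W) (hWV : W ⊆ V) {u s c : ℝ} {α β : ℝ≥0∞}
    (hIA : ∀ v ∈ W, volume (Ioo u s ∩ Ioo 0 (1 - t*v)) = α)
    (hIJ : ∀ w ∈ W, volume (Ioo u s ∩ Ioc (1 - t*w) 1) = β) :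
    ∫⁻ z in Ioo (0:ℝ) 1 ×ˢ V,
        Phi p q k ν V t ((Ioo u s ×ˢ W).indicator (fun _ => ENNReal.ofReal c)) z
        ∂(volume.prod ν)
      = ENNReal.ofReal c * α * ν W + ENNReal.ofReal (p + q)
          * (ENNReal.ofReal c * β * ν W) := by
  have hFm : Measurable ((Ioo u s ×ˢ W).indicator (fun _ => ENNReal.ofReal c)) :=
    measurable_const.indicator (measurableSet_Ioo.prod hWm)
  rw [master ha hab hp hq hV hVm hkm hknn hk1 ht0 ht1 hFm]
  have hIA' : ∫⁻ v in V, ∫⁻ x in Ioo 0 (1 - t*v),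
        ((Ioo u s ×ˢ W).indicator (fun _ => ENNReal.ofReal c)) (x, v) ∂volume ∂ν
      = ENNReal.ofReal c * α * ν W := by
    have hpt : ∀ᵐ v ∂ν, v ∈ V → (∫⁻ x in Ioo 0 (1 - t*v),
        ((Ioo u s ×ˢ W).indicator (fun _ => ENNReal.ofReal c)) (x, v) ∂volume)
        = W.indicator (fun _ => ENNReal.ofReal c * α) v := by
      refine ae_of_all _ fun v _ => ?_
      rw [helper1 v _ measurableSet_Ioo]
      by_cases hvW : v ∈ W
      · rw [indicator_of_mem hvW, indicator_of_mem hvW, hIA v hvW]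
      · rw [indicator_of_notMem hvW, indicator_of_notMem hvW]
    rw [setLIntegral_congr_fun_ae hVm hpt, helper2 hWm hWV]
  have hIJ' : ∫⁻ w in V, ∫⁻ y in Ioc (1 - t*w) 1,
        ((Ioo u s ×ˢ W).indicator (fun _ => ENNReal.ofReal c)) (y, w) ∂volume ∂ν
      = ENNReal.ofReal c * β * ν W := by
    have hpt : ∀ᵐ w ∂ν, w ∈ V → (∫⁻ y in Ioc (1 - t*w) 1,
        ((Ioo u s ×ˢ W).indicator (fun _ => ENNReal.ofReal c)) (y, w) ∂volume)
        = W.indicator (fun _ => ENNReal.ofReal c * β) w := by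
      refine ae_of_all _ fun w _ => ?_
      rw [helper1 w _ measurableSet_Ioc]
      by_cases hwW : w ∈ W
      · rw [indicator_of_mem hwW, indicator_of_mem hwW, hIJ w hwW]
      · rw [indicator_of_notMem hwW, indicator_of_notMem hwW]
    rw [setLIntegral_congr_fun_ae hVm hpt, helper2 hWm hWV]
  rw [hIA', hIJ']


theorem stmt8
    (a b p q : ℝ) (ha : 0 ≤ a) (hab : a < b)
    (hp : 0 ≤ p) (hq : 0 ≤ q) (hpq : 0 < p + q)
    (V : Set ℝ) (hV : V ⊆ Set.Ioo a b) (hVm : MeasurableSet V)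
    (ν : Measure ℝ) [SigmaFinite ν]
    (k : ℝ → ℝ → ℝ) (hkm : Measurable (Function.uncurry k))
    (hknn : ∀ w v : ℝ, 0 ≤ k w v)
    (hk1 : ∀ w ∈ V, ∫ v in V, k w v ∂ν = 1)
    (hνV : 0 < ν V)
    (t : ℝ) (ht0 : 0 < t) (ht1 : t ≤ b⁻¹) :
    (∀ f : ℝ × ℝ → ℝ,
        IntegrableOn f ((Set.Ioo (0 : ℝ) 1) ×ˢ V) ((volume : Measure ℝ).prod ν) →
        ∫ z in (Set.Ioo (0 : ℝ) 1) ×ˢ V, |Tt p q k ν V t f z|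
            ∂((volume : Measure ℝ).prod ν)
          ≤ max 1 (p + q) *
            ∫ z in (Set.Ioo (0 : ℝ) 1) ×ˢ V, |f z| ∂((volume : Measure ℝ).prod ν)) ∧
    (∀ ε : ℝ, 0 < ε →
        ∃ f : ℝ × ℝ → ℝ,
          IntegrableOn f ((Set.Ioo (0 : ℝ) 1) ×ˢ V) ((volume : Measure ℝ).prod ν) ∧
          ∫ z in (Set.Ioo (0 : ℝ) 1) ×ˢ V, |f z| ∂((volume : Measure ℝ).prod ν) = 1 ∧
          max 1 (p + q) - ε <
            ∫ z in (Set.Ioo (0 : ℝ) 1) ×ˢ V, |Tt p q k ν V t f z|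
              ∂((volume : Measure ℝ).prod ν)) := by
  constructor
  · intro f hf
    exact part1 ha hab hp hq hV hVm hkm hknn hk1 ht0 ht1 f hf
  · intro ε hε
    obtain ⟨a', b', W, haa', ha'b', hb'b, hWm, hWV, hWI, hW0, hWfin⟩ :=
      exists_W hab hV hVm hνV
    set m := (ν W).toReal with hm
    have hm0 : 0 < m := ENNReal.toReal_pos hW0.ne' hWfin.ne
    have hb : 0 < b := ha.trans_lt hab
    have htb : t * b ≤ 1 := by
      calc t * b ≤ b⁻¹ * b := mul_le_mul_of_nonneg_right ht1 hb.le
      _ = 1 := inv_mul_cancel₀ hb.ne'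
    have ha'0 : 0 < a' := lt_of_le_of_lt ha haa'
    have hb'0 : 0 < b' := lt_of_lt_of_le ha'0 ha'b'
    by_cases hcase : p + q ≤ 1
    · -- bulk transport case: max = 1
      have htb' : t * b' < 1 := by nlinarith
      have hs0 : 0 < 1 - t * b' := by linarith
      have hs1 : 1 - t * b' ≤ 1 := by nlinarith
      set c := ((1 - t * b') * m)⁻¹ with hc
      have hc0 : 0 ≤ c := inv_nonneg.2 (by positivity)
      obtain ⟨hint, hval⟩ := indicator_stuff (ν := ν) (V := V) hWm hWV hWfin.ne
        (u := 0) (s := 1 - t * b') le_rfl hs0 hs1 hc0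
      refine ⟨_, hint, ?_, ?_⟩
      · rw [hval, sub_zero, ← hm, hc]
        field_simp
      · have hIA : ∀ v ∈ W, volume (Ioo (0:ℝ) (1 - t * b') ∩ Ioo 0 (1 - t*v))
            = ENNReal.ofReal (1 - t * b') := by
          intro v hv
          have hvb' : v ≤ b' := (hWI hv).2
          have hsub : Ioo (0:ℝ) (1 - t * b') ∩ Ioo 0 (1 - t*v) = Ioo 0 (1 - t * b') := by
            apply inter_eq_self_of_subset_left
            intro x hx
            exact ⟨hx.1, lt_of_lt_of_le hx.2 (by nlinarith)⟩
          rw [hsub, Real.volume_Ioo, sub_zero]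
        have hIJ : ∀ w ∈ W, volume (Ioo (0:ℝ) (1 - t * b') ∩ Ioc (1 - t*w) 1) = 0 := by
          intro w hw
          have hwb' : w ≤ b' := (hWI hw).2
          have hempty : Ioo (0:ℝ) (1 - t * b') ∩ Ioc (1 - t*w) 1 = ∅ := by
            apply eq_empty_iff_forall_notMem.2
            rintro x ⟨⟨_, hxs⟩, hx1, _⟩
            nlinarith
          rw [hempty, measure_empty]
        have hphi := phi_ind_value (c := c) ha hab hp hq hV hVm hkm hknn hk1 ht0 ht1 hWm hWV hIA hIJ
        have hFeq : (fun z => ENNReal.ofReal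
              (((Ioo (0:ℝ) (1 - t * b') ×ˢ W).indicator fun _ => c) z))
            = (Ioo (0:ℝ) (1 - t * b') ×ˢ W).indicator (fun _ => ENNReal.ofReal c) := by
          funext z
          by_cases hz : z ∈ Ioo (0:ℝ) (1 - t * b') ×ˢ W
          · rw [indicator_of_mem hz, indicator_of_mem hz]
          · rw [indicator_of_notMem hz, indicator_of_notMem hz, ENNReal.ofReal_zero]
        have hvalue : ∫⁻ z in Ioo (0:ℝ) 1 ×ˢ V, Phi p q k ν V t
              (fun z => ENNReal.ofReal
                (((Ioo (0:ℝ) (1 - t * b') ×ˢ W).indicator fun _ => c) z)) z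
              ∂(volume.prod ν)
            = ENNReal.ofReal c * ENNReal.ofReal (1 - t * b') * ν W := by
          rw [hFeq, hphi]
          simp
        rw [TtRepr hkm _ (measurable_const.indicator (measurableSet_Ioo.prod hWm))
          (fun z => indicator_nonneg (fun _ _ => hc0) z)
          (by
            rw [hvalue]
            exact ENNReal.mul_ne_top
              (ENNReal.mul_ne_top ENNReal.ofReal_ne_top ENNReal.ofReal_ne_top) hWfin.ne),
          hvalue, ENNReal.toReal_mul, ENNReal.toReal_mul, ENNReal.toReal_ofReal hc0,
          ENNReal.toReal_ofReal hs0.le, ← hm, max_eq_left hcase]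
        have hone : c * (1 - t * b') * m = 1 := by
          rw [hc]
          field_simp
        rw [hone]
        linarith
    · -- boundary case: max = p + q
      push_neg at hcase
      set δ := min (t * a' / 2) 2⁻¹ with hδ
      have hδ0 : 0 < δ := lt_min (by positivity) (by norm_num)
      have hδa' : δ < t * a' := by
        have h1 : δ ≤ t * a' / 2 := min_le_left _ _
        have h2 : 0 < t * a' := mul_pos ht0 ha'0
        linarith
      have hδhalf : δ ≤ 2⁻¹ := min_le_right _ _
      have h0u : (0:ℝ) ≤ 1 - δ := by norm_num at hδhalf ⊢; linarith
      have hus : 1 - δ < 1 := by linarith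
      set c := (δ * m)⁻¹ with hc
      have hc0 : 0 ≤ c := inv_nonneg.2 (by positivity)
      obtain ⟨hint, hval⟩ := indicator_stuff (ν := ν) (V := V) hWm hWV hWfin.ne
        (u := 1 - δ) (s := 1) h0u hus le_rfl hc0
      refine ⟨_, hint, ?_, ?_⟩
      · rw [hval, show (1:ℝ) - (1 - δ) = δ by ring, ← hm, hc]
        field_simp
      · have hIA : ∀ v ∈ W, volume (Ioo (1 - δ) 1 ∩ Ioo 0 (1 - t*v)) = 0 := by
          intro v hv
          have hva' : a' ≤ v := (hWI hv).1
          have hδv : δ ≤ t * v := by nlinarith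
          have hempty : Ioo (1 - δ) 1 ∩ Ioo 0 (1 - t*v) = ∅ := by
            apply eq_empty_iff_forall_notMem.2
            rintro x ⟨⟨hxu, _⟩, _, hx2⟩
            nlinarith
          rw [hempty, measure_empty]
        have hIJ : ∀ w ∈ W, volume (Ioo (1 - δ) 1 ∩ Ioc (1 - t*w) 1)
            = ENNReal.ofReal δ := by
          intro w hw
          have hwa' : a' ≤ w := (hWI hw).1
          have hδw : δ ≤ t * w := by nlinarith
          have hsub : Ioo (1 - δ) 1 ∩ Ioc (1 - t*w) 1 = Ioo (1 - δ) 1 := by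
            apply inter_eq_self_of_subset_left
            intro x hx
            exact ⟨by linarith [hx.1], hx.2.le⟩
          rw [hsub, Real.volume_Ioo, show (1:ℝ) - (1 - δ) = δ by ring]
        have hphi := phi_ind_value (c := c) ha hab hp hq hV hVm hkm hknn hk1 ht0 ht1 hWm hWV hIA hIJ
        have hFeq : (fun z => ENNReal.ofReal
              (((Ioo (1 - δ) 1 ×ˢ W).indicator fun _ => c) z))
            = (Ioo (1 - δ) 1 ×ˢ W).indicator (fun _ => ENNReal.ofReal c) := by
          funext z
          by_cases hz : z ∈ Ioo (1 - δ) 1 ×ˢ W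
          · rw [indicator_of_mem hz, indicator_of_mem hz]
          · rw [indicator_of_notMem hz, indicator_of_notMem hz, ENNReal.ofReal_zero]
        have hvalue : ∫⁻ z in Ioo (0:ℝ) 1 ×ˢ V, Phi p q k ν V t
              (fun z => ENNReal.ofReal
                (((Ioo (1 - δ) 1 ×ˢ W).indicator fun _ => c) z)) z
              ∂(volume.prod ν)
            = ENNReal.ofReal (p + q) * (ENNReal.ofReal c * ENNReal.ofReal δ * ν W) := by
          rw [hFeq, hphi]
          simp
        rw [TtRepr hkm _ (measurable_const.indicator (measurableSet_Ioo.prod hWm))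
          (fun z => indicator_nonneg (fun _ _ => hc0) z)
          (by
            rw [hvalue]
            exact ENNReal.mul_ne_top ENNReal.ofReal_ne_top (ENNReal.mul_ne_top
              (ENNReal.mul_ne_top ENNReal.ofReal_ne_top ENNReal.ofReal_ne_top) hWfin.ne)),
          hvalue, ENNReal.toReal_mul, ENNReal.toReal_mul, ENNReal.toReal_mul,
          ENNReal.toReal_ofReal (by linarith : (0:ℝ) ≤ p + q), ENNReal.toReal_ofReal hc0,
          ENNReal.toReal_ofReal hδ0.le, ← hm, max_eq_right hcase.le]
        have hone : c * δ * m = 1 := by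
          rw [hc]
          field_simp
        rw [mul_assoc] at hone ⊢
        rw [hone, mul_one]
        linarith
end
end

section
/- Assume p + q = 1. Then for every t ∈ [0, b⁻¹] the operator T(t) is a Markov operator on L¹(Ω,μ): if f ∈ L¹(Ω,μ) satisfies f ≥ 0 μ-a.e., then T(t)f ≥ 0 μ-a.e. and ‖T(t)f‖_{L¹(Ω)} = ‖f‖_{L¹(Ω)}. -/
open MeasureTheory Set Filter Topology

open scoped ENNReal NNReal


lemma map_volume_affine {c : ℝ} (hc : c ≠ 0) (d : ℝ) :
    Measure.map (fun x => c * x + d) (volume : Measure ℝ)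
      = ENNReal.ofReal |c⁻¹| • (volume : Measure ℝ) := by
  have : (fun x => c * x + d) = (fun y : ℝ => y + d) ∘ (fun x => c * x) := rfl
  rw [this, ← Measure.map_map (by fun_prop) (by fun_prop), Real.map_volume_mul_left hc,
    Measure.map_smul, map_add_right_eq_self]

lemma lintegral_affine {h : ℝ → ℝ≥0∞} (hm : Measurable h) {c : ℝ} (hc : c ≠ 0) (d : ℝ) :
    ∫⁻ x, h (c * x + d) ∂(volume : Measure ℝ)
      = ENNReal.ofReal |c⁻¹| * ∫⁻ y, h y ∂(volume : Measure ℝ) := by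
  rw [← lintegral_map hm (by fun_prop : Measurable fun x : ℝ => c * x + d),
    map_volume_affine hc d, lintegral_smul_measure, smul_eq_mul]

lemma setLIntegral_affine_preimage {h : ℝ → ℝ≥0∞} (hm : Measurable h) {c : ℝ} (hc : c ≠ 0)
    (d : ℝ) {s : Set ℝ} (hs : MeasurableSet s) :
    ∫⁻ x in (fun x => c * x + d) ⁻¹' s, h (c * x + d) ∂(volume : Measure ℝ)
      = ENNReal.ofReal |c⁻¹| * ∫⁻ y in s, h y ∂(volume : Measure ℝ) := by
  calc ∫⁻ x in (fun x => c * x + d) ⁻¹' s, h (c * x + d) ∂(volume : Measure ℝ)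
      = ∫⁻ x, (((fun x => c * x + d) ⁻¹' s).indicator (h ∘ fun x => c * x + d)) x ∂volume := by
        rw [lintegral_indicator (hs.preimage (by fun_prop : Measurable fun x : ℝ => c * x + d)) _]; rfl
    _ = ∫⁻ x, (s.indicator h) (c * x + d) ∂volume := by
        refine lintegral_congr fun x => ?_
        by_cases hx : c * x + d ∈ s <;>
          simp [Set.indicator, hx, Set.mem_preimage, Function.comp]
    _ = ENNReal.ofReal |c⁻¹| * ∫⁻ y, s.indicator h y ∂volume :=
        lintegral_affine (hm.indicator hs) hc d
    _ = ENNReal.ofReal |c⁻¹| * ∫⁻ y in s, h y ∂volume := by rw [lintegral_indicator hs]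

lemma volume_affine_preimage_null {c : ℝ} (hc : c ≠ 0) (d : ℝ) {s : Set ℝ}
    (hs : volume s = 0) : volume ((fun x => c * x + d) ⁻¹' s) = 0 := by
  obtain ⟨u, hsu, hum, hu⟩ := exists_measurable_superset_of_null hs
  refine measure_mono_null (Set.preimage_mono hsu) ?_
  rw [← Measure.map_apply (f := fun x => c * x + d) (by fun_prop) hum, map_volume_affine hc d]
  simp [hu]

lemma affine_preimage_Ioc {c : ℝ} (hc : 0 < c) (d A B : ℝ) :
    (fun x : ℝ => c * x + d) ⁻¹' (Ioc (c * A + d) (c * B + d)) = Ioc A B := by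
  ext x
  simp only [Set.mem_preimage, Set.mem_Ioc, add_lt_add_iff_right, add_le_add_iff_right,
    mul_lt_mul_iff_right₀ hc, mul_le_mul_iff_right₀ hc]

lemma affine_preimage_Ioo {c : ℝ} (hc : 0 < c) (d A B : ℝ) :
    (fun x : ℝ => c * x + d) ⁻¹' (Ioo (c * A + d) (c * B + d)) = Ioo A B := by
  ext x
  simp only [Set.mem_preimage, Set.mem_Ioo, add_lt_add_iff_right, mul_lt_mul_iff_right₀ hc]

lemma setLIntegral_affine_Ioc {h : ℝ → ℝ≥0∞} (hm : Measurable h) {c : ℝ} (hc : 0 < c)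
    (d A B : ℝ) :
    ∫⁻ x in Ioc A B, h (c * x + d) ∂(volume : Measure ℝ)
      = ENNReal.ofReal c⁻¹ * ∫⁻ y in Ioc (c * A + d) (c * B + d), h y ∂(volume : Measure ℝ) := by
  rw [← affine_preimage_Ioc hc d A B,
    setLIntegral_affine_preimage hm hc.ne' d measurableSet_Ioc, abs_of_pos (inv_pos.2 hc)]

lemma setLIntegral_affine_Ioo {h : ℝ → ℝ≥0∞} (hm : Measurable h) {c : ℝ} (hc : 0 < c)
    (d A B : ℝ) :
    ∫⁻ x in Ioo A B, h (c * x + d) ∂(volume : Measure ℝ)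
      = ENNReal.ofReal c⁻¹ * ∫⁻ y in Ioo (c * A + d) (c * B + d), h y ∂(volume : Measure ℝ) := by
  rw [← affine_preimage_Ioo hc d A B,
    setLIntegral_affine_preimage hm hc.ne' d measurableSet_Ioo, abs_of_pos (inv_pos.2 hc)]

lemma setLIntegral_shift_Ioo {h : ℝ → ℝ≥0∞} (hm : Measurable h) (d A B : ℝ) :
    ∫⁻ x in Ioo A B, h (x + d) ∂(volume : Measure ℝ)
      = ∫⁻ y in Ioo (A + d) (B + d), h y ∂(volume : Measure ℝ) := by
  have h1 : ∫⁻ x in Ioo A B, h (x + d) ∂(volume : Measure ℝ)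
      = ∫⁻ x in Ioo A B, h (1 * x + d) ∂(volume : Measure ℝ) :=
    lintegral_congr fun x => by rw [one_mul]
  rw [h1, setLIntegral_affine_Ioo hm one_pos d A B]
  simp

lemma setLIntegral_shift_Ioc {h : ℝ → ℝ≥0∞} (hm : Measurable h) (d A B : ℝ) :
    ∫⁻ x in Ioc A B, h (x + d) ∂(volume : Measure ℝ)
      = ∫⁻ y in Ioc (A + d) (B + d), h y ∂(volume : Measure ℝ) := by
  have h1 : ∫⁻ x in Ioc A B, h (x + d) ∂(volume : Measure ℝ)
      = ∫⁻ x in Ioc A B, h (1 * x + d) ∂(volume : Measure ℝ) :=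
    lintegral_congr fun x => by rw [one_mul]
  rw [h1, setLIntegral_affine_Ioc hm one_pos d A B]
  simp

lemma Ioc_ae_eq_Ico' (A B : ℝ) : Ioc A B =ᵐ[(volume : Measure ℝ)] Ico A B :=
  Ioo_ae_eq_Ioc.symm.trans Ioo_ae_eq_Ico

theorem stmt9
    (a b p q : ℝ) (ha : 0 ≤ a) (hab : a < b)
    (hp : 0 ≤ p) (hq : 0 ≤ q) (hpq : 0 < p + q)
    (V : Set ℝ) (hV : V ⊆ Set.Ioo a b) (hVm : MeasurableSet V)
    (ν : Measure ℝ) [SigmaFinite ν]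
    (k : ℝ → ℝ → ℝ) (hkm : Measurable (Function.uncurry k))
    (hknn : ∀ w v : ℝ, 0 ≤ k w v)
    (hk1 : ∀ w ∈ V, ∫ v in V, k w v ∂ν = 1)
    (hpq1 : p + q = 1)
    (t : ℝ) (ht0 : 0 ≤ t) (ht1 : t ≤ b⁻¹)
    (f : ℝ × ℝ → ℝ)
    (hf : IntegrableOn f ((Set.Ioo (0 : ℝ) 1) ×ˢ V) ((volume : Measure ℝ).prod ν))
    (hfnn : ∀ᵐ z ∂(((volume : Measure ℝ).prod ν).restrict ((Set.Ioo (0 : ℝ) 1) ×ˢ V)),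
      0 ≤ f z) :
    (∀ᵐ z ∂(((volume : Measure ℝ).prod ν).restrict ((Set.Ioo (0 : ℝ) 1) ×ˢ V)),
      0 ≤ Tt p q k ν V t f z) ∧
    ∫ z in (Set.Ioo (0 : ℝ) 1) ×ˢ V, |Tt p q k ν V t f z| ∂((volume : Measure ℝ).prod ν)
      = ∫ z in (Set.Ioo (0 : ℝ) 1) ×ˢ V, |f z| ∂((volume : Measure ℝ).prod ν) := by
  have hb : 0 < b := ha.trans_lt hab
  set μ : Measure (ℝ × ℝ) := (volume : Measure ℝ).prod ν with hμdef
  set Ω : Set (ℝ × ℝ) := (Set.Ioo (0 : ℝ) 1) ×ˢ V with hΩdef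
  have hΩm : MeasurableSet Ω := measurableSet_Ioo.prod hVm
  have hVpos : ∀ v ∈ V, 0 < v := fun v hv => ha.trans_lt (hV hv).1
  have hVb : ∀ v ∈ V, v < b := fun v hv => (hV hv).2
  have htv1 : ∀ v ∈ V, t * v < 1 := by
    intro v hv
    calc t * v ≤ b⁻¹ * v := mul_le_mul_of_nonneg_right ht1 (hVpos v hv).le
      _ < b⁻¹ * b := by
          exact mul_lt_mul_of_pos_left (hVb v hv) (inv_pos.2 hb)
      _ = 1 := inv_mul_cancel₀ hb.ne'
  have htv0 : ∀ v ∈ V, 0 ≤ t * v := fun v hv => mul_nonneg ht0 (hVpos v hv).le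
  -- the measurable nonnegative representative
  have hmk := hf.1
  set g : ℝ × ℝ → ℝ := Ω.indicator (fun z => max (hmk.mk f z) 0) with hgdef
  have hg : Measurable g :=
    (hmk.measurable_mk.max measurable_const).indicator hΩm
  have hg0 : ∀ z, 0 ≤ g z := fun z =>
    Set.indicator_nonneg (fun z _ => le_max_right _ _) z
  have hfg : f =ᵐ[μ.restrict Ω] g := by
    filter_upwards [hmk.ae_eq_mk, hfnn, ae_restrict_mem hΩm] with z h1 h2 h3
    rw [hgdef, Set.indicator_of_mem h3, ← h1, max_eq_left h2]
  have hgint : IntegrableOn g Ω μ := (integrable_congr hfg).mp hf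
  set F : ℝ × ℝ → ℝ≥0∞ := fun z => ENNReal.ofReal (g z) with hFdef
  have hF : Measurable F := hg.ennreal_ofReal
  have hFfin : ∫⁻ z in Ω, F z ∂μ ≠ ⊤ := by
    have h1 : ∫⁻ z in Ω, F z ∂μ = ∫⁻ z in Ω, (‖g z‖₊ : ℝ≥0∞) ∂μ := by
      refine lintegral_congr fun z => ?_
      simp only [hFdef]
      exact (Real.enorm_eq_ofReal (hg0 z)).symm
    rw [h1]
    exact hgint.2.ne
  set G : ℝ × ℝ → ℝ≥0∞ := fun z =>
    if t * z.2 < z.1 then F (z.1 - t * z.2, z.2)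
    else (∫⁻ w in V, ENNReal.ofReal (p * w * z.2⁻¹ * k w z.2)
            * F (1 + z.1 * w * z.2⁻¹ - t * w, w) ∂ν)
          + ENNReal.ofReal q * F (1 + z.1 - t * z.2, z.2) with hGdef
  have hkz : Measurable fun zw : (ℝ × ℝ) × ℝ => k zw.2 zw.1.2 :=
    hkm.comp (measurable_snd.prodMk (measurable_fst.snd))
  have hG : Measurable G := by
    refine Measurable.ite (measurableSet_lt (by fun_prop) (by fun_prop))
      (hF.comp ((measurable_fst.sub (measurable_const.mul measurable_snd)).prodMk
        measurable_snd)) (Measurable.add ?_ ?_)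
    · refine Measurable.lintegral_prod_right (f := fun (z : ℝ × ℝ) (w : ℝ) =>
        ENNReal.ofReal (p * w * z.2⁻¹ * k w z.2) * F (1 + z.1 * w * z.2⁻¹ - t * w, w)) ?_
      refine Measurable.mul ?_ (hF.comp ?_)
      · exact ((((measurable_const.mul (measurable_snd))).mul
          (measurable_fst.snd.inv)).mul hkz).ennreal_ofReal
      · exact ((measurable_const.add ((measurable_fst.fst.mul measurable_snd).mul
          measurable_fst.snd.inv)).sub (measurable_const.mul measurable_snd)).prodMk
          measurable_snd
    · exact measurable_const.mul (hF.comp (((measurable_const.add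
        measurable_fst).sub (measurable_const.mul measurable_snd)).prodMk measurable_snd))
  have key : ∫⁻ z in Ω, G z ∂μ = ∫⁻ z in Ω, F z ∂μ := by
    have hprodr : μ.restrict Ω
        = ((volume : Measure ℝ).restrict (Set.Ioo 0 1)).prod (ν.restrict V) := by
      rw [hμdef, hΩdef, Measure.prod_restrict]
    set J : ℝ → ℝ≥0∞ := fun w => ∫⁻ y in Ico (1 - t * w) 1, F (y, w) ∂volume with hJdef
    set A : ℝ → ℝ≥0∞ := fun v => ∫⁻ y in Ioo 0 (1 - t * v), F (y, v) ∂volume with hAdef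
    set K : ℝ → ℝ≥0∞ := fun v => ∫⁻ w in V, ENNReal.ofReal (p * k w v) * J w ∂ν with hKdef
    have hJm : Measurable J := by
      have e : ∀ w, J w
          = ∫⁻ y, (if 1 - t * w ≤ y ∧ y < 1 then F (y, w) else 0) ∂volume := by
        intro w
        rw [show J w = ∫⁻ y in Ico (1 - t * w) 1, F (y, w) ∂volume from rfl,
          ← lintegral_indicator measurableSet_Ico]
        refine lintegral_congr fun y => ?_
        simp [Set.indicator_apply, Set.mem_Ico]
      have e2 : (fun w => ∫⁻ y, (if 1 - t * w ≤ y ∧ y < 1 then F (y, w) else 0) ∂volume)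
          = J := funext fun w => (e w).symm
      rw [← e2]
      refine Measurable.lintegral_prod_right
        (f := fun (w : ℝ) (y : ℝ) => if 1 - t * w ≤ y ∧ y < 1 then F (y, w) else 0) ?_
      refine Measurable.ite ?_ (hF.comp (measurable_snd.prodMk measurable_fst))
        measurable_const
      exact ((measurableSet_le (measurable_const.sub (measurable_const.mul measurable_fst))
        measurable_snd).inter (measurableSet_lt measurable_snd measurable_const))
    have hAm : Measurable A := by
      have e : ∀ v, A v
          = ∫⁻ y, (if 0 < y ∧ y < 1 - t * v then F (y, v) else 0) ∂volume := by
        intro v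
        rw [show A v = ∫⁻ y in Ioo 0 (1 - t * v), F (y, v) ∂volume from rfl,
          ← lintegral_indicator measurableSet_Ioo]
        refine lintegral_congr fun y => ?_
        simp [Set.indicator_apply, Set.mem_Ioo]
      have e2 : (fun v => ∫⁻ y, (if 0 < y ∧ y < 1 - t * v then F (y, v) else 0) ∂volume)
          = A := funext fun v => (e v).symm
      rw [← e2]
      refine Measurable.lintegral_prod_right
        (f := fun (v : ℝ) (y : ℝ) => if 0 < y ∧ y < 1 - t * v then F (y, v) else 0) ?_
      refine Measurable.ite ?_ (hF.comp (measurable_snd.prodMk measurable_fst))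
        measurable_const
      exact ((measurableSet_lt measurable_const measurable_snd).inter
        (measurableSet_lt measurable_snd
          (measurable_const.sub (measurable_const.mul measurable_fst))))
    have hKm : Measurable K := by
      refine Measurable.lintegral_prod_right
        (f := fun (v : ℝ) (w : ℝ) => ENNReal.ofReal (p * k w v) * J w) ?_
      exact (((hkm.comp (measurable_snd.prodMk measurable_fst)).const_mul p).ennreal_ofReal).mul
        (hJm.comp measurable_snd)
    have inner_eq : ∀ v ∈ V, ∫⁻ x in Ioo (0:ℝ) 1, G (x, v) ∂volume
        = K v + (ENNReal.ofReal q * J v + A v) := by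
      intro v hv
      have hv0 : 0 < v := hVpos v hv
      have hsplit : Ioo (0:ℝ) 1 = Ioc 0 (t*v) ∪ Ioo (t*v) 1 :=
        (Set.Ioc_union_Ioo_eq_Ioo (htv0 v hv) (htv1 v hv)).symm
      have hdisj : Disjoint (Ioc (0:ℝ) (t*v)) (Ioo (t*v) 1) :=
        Set.disjoint_left.mpr fun x hx hx' => absurd hx.2 (not_le.mpr hx'.1)
      have hFv : Measurable fun y : ℝ => F (y, v) :=
        hF.comp (measurable_id.prodMk measurable_const)
      have hB : ∫⁻ x in Ioo (t*v) 1, G (x, v) ∂volume = A v := by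
        have h1 : ∫⁻ x in Ioo (t*v) 1, G (x, v) ∂volume
            = ∫⁻ x in Ioo (t*v) 1, F (x - t*v, v) ∂volume := by
          refine setLIntegral_congr_fun measurableSet_Ioo (fun x hx => ?_)
          simp only [hGdef]
          rw [if_pos hx.1]
        have h2 : ∫⁻ x in Ioo (t*v) 1, F (x - t*v, v) ∂volume
            = ∫⁻ x in Ioo (t*v) 1, (fun y => F (y, v)) (x + -(t*v)) ∂volume :=
          lintegral_congr fun x => by rw [sub_eq_add_neg]
        rw [h1, h2, setLIntegral_shift_Ioo hFv (-(t*v)) (t*v) 1,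
          show t*v + -(t*v) = (0:ℝ) by ring, show (1:ℝ) + -(t*v) = 1 - t*v by ring]
      have hΦm : Measurable (Function.uncurry fun (x : ℝ) (w : ℝ) =>
          ENNReal.ofReal (p * w * v⁻¹ * k w v) * F (1 + x * w * v⁻¹ - t * w, w)) := by
        refine Measurable.mul ?_ (hF.comp ?_)
        · exact (((measurable_const.mul measurable_snd).mul measurable_const).mul
            (hkm.comp (measurable_snd.prodMk measurable_const))).ennreal_ofReal
        · exact ((measurable_const.add ((measurable_fst.mul measurable_snd).mul
            measurable_const)).sub (measurable_const.mul measurable_snd)).prodMk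
            measurable_snd
      have hKxm : Measurable fun x : ℝ =>
          ∫⁻ w in V, ENNReal.ofReal (p * w * v⁻¹ * k w v)
            * F (1 + x * w * v⁻¹ - t * w, w) ∂ν :=
        Measurable.lintegral_prod_right hΦm
      have hDm : Measurable fun x : ℝ => F (1 + x - t*v, v) :=
        hF.comp (((measurable_const.add measurable_id).sub measurable_const).prodMk
          measurable_const)
      have hC : ∫⁻ x in Ioc 0 (t*v), G (x, v) ∂volume
          = K v + ENNReal.ofReal q * J v := by
        have h1 : ∫⁻ x in Ioc 0 (t*v), G (x, v) ∂volume
            = ∫⁻ x in Ioc 0 (t*v),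
                ((∫⁻ w in V, ENNReal.ofReal (p * w * v⁻¹ * k w v)
                  * F (1 + x * w * v⁻¹ - t * w, w) ∂ν)
                + ENNReal.ofReal q * F (1 + x - t*v, v)) ∂volume := by
          refine setLIntegral_congr_fun measurableSet_Ioc (fun x hx => ?_)
          simp only [hGdef]
          rw [if_neg (not_lt.mpr hx.2)]
        rw [h1, lintegral_add_left hKxm]
        congr 1
        · -- kernel part
          rw [lintegral_lintegral_swap hΦm.aemeasurable]
          refine lintegral_congr_ae ?_
          filter_upwards [ae_restrict_mem hVm] with w hw
          have hw0 : 0 < w := hVpos w hw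
          have hwv : 0 < w * v⁻¹ := mul_pos hw0 (inv_pos.2 hv0)
          have hFw : Measurable fun y : ℝ => F (y, w) :=
            hF.comp (measurable_id.prodMk measurable_const)
          calc ∫⁻ x in Ioc 0 (t*v), ENNReal.ofReal (p * w * v⁻¹ * k w v)
                * F (1 + x * w * v⁻¹ - t * w, w) ∂volume
              = ENNReal.ofReal (p * w * v⁻¹ * k w v)
                * ∫⁻ x in Ioc 0 (t*v), (fun y => F (y, w)) ((w * v⁻¹) * x + (1 - t*w))
                    ∂volume := by
                rw [← lintegral_const_mul _ (by
                  exact hFw.comp ((measurable_const.mul measurable_id).add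
                    measurable_const))]
                refine lintegral_congr fun x => ?_
                rw [show (w * v⁻¹) * x + (1 - t*w) = 1 + x * w * v⁻¹ - t * w by ring]
            _ = ENNReal.ofReal (p * w * v⁻¹ * k w v) * (ENNReal.ofReal (w * v⁻¹)⁻¹
                * ∫⁻ y in Ioc ((w * v⁻¹) * 0 + (1 - t*w)) ((w * v⁻¹) * (t*v) + (1 - t*w)),
                    F (y, w) ∂volume) := by
                rw [setLIntegral_affine_Ioc hFw hwv (1 - t*w) 0 (t*v)]
            _ = ENNReal.ofReal (p * k w v) * J w := by
                rw [show (w * v⁻¹) * 0 + (1 - t*w) = 1 - t*w by ring,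
                  show (w * v⁻¹) * (t*v) + (1 - t*w) = 1 by field_simp; ring,
                  setLIntegral_congr (Ioc_ae_eq_Ico' (1 - t*w) 1), ← mul_assoc,
                  ← ENNReal.ofReal_mul (mul_nonneg (mul_nonneg (mul_nonneg hp hw0.le)
                    (inv_nonneg.2 hv0.le)) (hknn w v)),
                  show p * w * v⁻¹ * k w v * (w * v⁻¹)⁻¹ = p * k w v from by
                    field_simp]
        · -- dirac part
          rw [lintegral_const_mul _ hDm]
          congr 1
          have h2 : ∫⁻ x in Ioc 0 (t*v), F (1 + x - t*v, v) ∂volume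
              = ∫⁻ x in Ioc 0 (t*v), (fun y => F (y, v)) (x + (1 - t*v)) ∂volume :=
            lintegral_congr fun x => by rw [show x + (1 - t*v) = 1 + x - t*v by ring]
          rw [h2, setLIntegral_shift_Ioc hFv (1 - t*v) 0 (t*v),
            show (0:ℝ) + (1 - t*v) = 1 - t*v by ring, show t*v + (1 - t*v) = (1:ℝ) by ring,
            setLIntegral_congr (Ioc_ae_eq_Ico' (1 - t*v) 1)]
      rw [hsplit, lintegral_union measurableSet_Ioo hdisj, hB, hC, add_assoc]
    have hKswap : ∫⁻ v in V, K v ∂ν = ENNReal.ofReal p * ∫⁻ w in V, J w ∂ν := by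
      have hswap : ∫⁻ v in V, ∫⁻ w in V, ENNReal.ofReal (p * k w v) * J w ∂ν ∂ν
          = ∫⁻ w in V, ∫⁻ v in V, ENNReal.ofReal (p * k w v) * J w ∂ν ∂ν := by
        refine lintegral_lintegral_swap ?_
        exact ((((hkm.comp (measurable_snd.prodMk measurable_fst)).const_mul p).ennreal_ofReal).mul
          (hJm.comp measurable_snd)).aemeasurable
      rw [hKdef]
      rw [hswap]
      have hinner : ∀ w ∈ V, ∫⁻ v in V, ENNReal.ofReal (p * k w v) * J w ∂ν
          = ENNReal.ofReal p * J w := by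
        intro w hw
        have hkwm : Measurable fun v => k w v :=
          hkm.comp (measurable_const.prodMk measurable_id)
        have hkint : Integrable (fun v => k w v) (ν.restrict V) := by
          by_contra h
          have h1 := hk1 w hw
          rw [integral_undef h] at h1
          norm_num at h1
        have h2 : ∫⁻ v in V, ENNReal.ofReal (k w v) ∂ν = 1 := by
          rw [← ofReal_integral_eq_lintegral_ofReal hkint
            (ae_of_all _ fun v => hknn w v), hk1 w hw, ENNReal.ofReal_one]
        calc ∫⁻ v in V, ENNReal.ofReal (p * k w v) * J w ∂ν
            = ∫⁻ v in V, (ENNReal.ofReal p * J w) * ENNReal.ofReal (k w v) ∂ν := by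
              refine lintegral_congr fun v => ?_
              rw [ENNReal.ofReal_mul hp]
              ring
          _ = (ENNReal.ofReal p * J w) * ∫⁻ v in V, ENNReal.ofReal (k w v) ∂ν :=
              lintegral_const_mul _ hkwm.ennreal_ofReal
          _ = ENNReal.ofReal p * J w := by rw [h2, mul_one]
      calc ∫⁻ w in V, ∫⁻ v in V, ENNReal.ofReal (p * k w v) * J w ∂ν ∂ν
          = ∫⁻ w in V, ENNReal.ofReal p * J w ∂ν := by
            refine lintegral_congr_ae ?_
            filter_upwards [ae_restrict_mem hVm] with w hw
            exact hinner w hw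
        _ = ENNReal.ofReal p * ∫⁻ w in V, J w ∂ν := lintegral_const_mul _ hJm
    calc ∫⁻ z in Ω, G z ∂μ
        = ∫⁻ z, G z ∂(((volume : Measure ℝ).restrict (Set.Ioo 0 1)).prod (ν.restrict V)) := by
          rw [← hprodr]
      _ = ∫⁻ v in V, ∫⁻ x in Set.Ioo (0:ℝ) 1, G (x, v) ∂volume ∂ν :=
          lintegral_prod_symm _ hG.aemeasurable
      _ = ∫⁻ v in V, (K v + (ENNReal.ofReal q * J v + A v)) ∂ν := by
          refine lintegral_congr_ae ?_
          filter_upwards [ae_restrict_mem hVm] with v hv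
          exact inner_eq v hv
      _ = (∫⁻ v in V, K v ∂ν)
            + ((ENNReal.ofReal q * ∫⁻ v in V, J v ∂ν) + ∫⁻ v in V, A v ∂ν) := by
          rw [lintegral_add_left hKm, lintegral_add_left (hJm.const_mul (ENNReal.ofReal q)),
            lintegral_const_mul _ hJm]
      _ = ∫⁻ v in V, A v ∂ν + (ENNReal.ofReal p + ENNReal.ofReal q) * ∫⁻ v in V, J v ∂ν := by
          rw [hKswap, add_mul]
          ring
      _ = ∫⁻ v in V, A v ∂ν + ∫⁻ v in V, J v ∂ν := by
          rw [← ENNReal.ofReal_add hp hq, hpq1, ENNReal.ofReal_one, one_mul]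
      _ = ∫⁻ v in V, (A v + J v) ∂ν := (lintegral_add_left hAm _).symm
      _ = ∫⁻ v in V, ∫⁻ y in Set.Ioo (0:ℝ) 1, F (y, v) ∂volume ∂ν := by
          refine lintegral_congr_ae ?_
          filter_upwards [ae_restrict_mem hVm] with v hv
          have h1 : (0:ℝ) < 1 - t * v := by linarith [htv1 v hv]
          have h2 : (1:ℝ) - t * v ≤ 1 := by linarith [htv0 v hv]
          have hdisj : Disjoint (Ioo (0:ℝ) (1 - t * v)) (Ico (1 - t * v) 1) :=
            Set.disjoint_left.mpr fun x hx hx' => absurd hx.2 (not_lt.mpr hx'.1)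
          rw [hAdef, hJdef]
          rw [← lintegral_union measurableSet_Ico hdisj,
            Set.Ioo_union_Ico_eq_Ioo h1 h2]
      _ = ∫⁻ z, F z ∂(((volume : Measure ℝ).restrict (Set.Ioo 0 1)).prod (ν.restrict V)) :=
          (lintegral_prod_symm _ hF.aemeasurable).symm
      _ = ∫⁻ z in Ω, F z ∂μ := by rw [← hprodr]
  have hGfin : ∀ᵐ z ∂μ.restrict Ω, G z < ⊤ := by
    refine ae_lt_top hG ?_
    rw [key]
    exact hFfin
  have hTgnn : ∀ z, 0 ≤ Tt p q k ν V t g z := by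
    intro z
    simp only [Tt]
    split
    · exact hg0 _
    · exact integral_nonneg fun w => hg0 _
  have hTg_eq : ∀ᵐ z ∂μ.restrict Ω, Tt p q k ν V t g z = (G z).toReal := by
    filter_upwards [ae_restrict_mem hΩm, hGfin] with z hzΩ hGz
    have hv : z.2 ∈ V := hzΩ.2
    have hv0 : 0 < z.2 := hVpos _ hv
    have hη : Measurable fun w : ℝ => (1 + z.1 * w * z.2⁻¹ - t * w, w) :=
      ((measurable_const.add ((measurable_const.mul measurable_id).mul
        measurable_const)).sub (measurable_const.mul measurable_id)).prodMk measurable_id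
    by_cases hcase : t * z.2 < z.1
    · have e1 : Tt p q k ν V t g z = g (z.1 - t * z.2, z.2) := by
        simp only [Tt]; rw [if_pos hcase]
      have e2 : G z = F (z.1 - t * z.2, z.2) := by
        simp only [hGdef]; rw [if_pos hcase]
      rw [e1, e2, hFdef, ENNReal.toReal_ofReal (hg0 _)]
    · have hGz' : G z = ∫⁻ w, F (1 + z.1 * w * z.2⁻¹ - t * w, w) ∂(ell p q k ν V z.2) := by
        have e2 : G z = (∫⁻ w in V, ENNReal.ofReal (p * w * z.2⁻¹ * k w z.2)
            * F (1 + z.1 * w * z.2⁻¹ - t * w, w) ∂ν)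
            + ENNReal.ofReal q * F (1 + z.1 - t * z.2, z.2) := by
          simp only [hGdef]; rw [if_neg hcase]
        rw [e2]
        simp only [ell, lintegral_add_measure, lintegral_smul_measure]
        rw [lintegral_withDensity_eq_lintegral_mul _
          (by fun_prop : Measurable fun w => ENNReal.ofReal (p * w * z.2⁻¹ * k w z.2))
          (show Measurable fun w : ℝ => F (1 + z.1 * w * z.2⁻¹ - t * w, w) from hF.comp hη)]
        rw [lintegral_dirac' _
          (show Measurable fun w : ℝ => F (1 + z.1 * w * z.2⁻¹ - t * w, w) from hF.comp hη)]
        have e3 : (1 : ℝ) + z.1 * z.2 * z.2⁻¹ - t * z.2 = 1 + z.1 - t * z.2 := by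
          rw [mul_assoc, mul_inv_cancel₀ hv0.ne', mul_one]
        rw [e3]
        rfl
      have e1 : Tt p q k ν V t g z
          = ∫ w, g (1 + z.1 * w * z.2⁻¹ - t * w, w) ∂(ell p q k ν V z.2) := by
        simp only [Tt]; rw [if_neg hcase]
      rw [e1, integral_eq_lintegral_of_nonneg_ae (ae_of_all _ fun w => hg0 _)
        ((show Measurable fun w : ℝ => g (1 + z.1 * w * z.2⁻¹ - t * w, w) from
          hg.comp hη).aestronglyMeasurable), hGz']
  have hA : Tt p q k ν V t f =ᵐ[μ.restrict Ω] Tt p q k ν V t g := by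
    -- a measurable null set capturing where `f` and `g` differ inside `Ω`
    obtain ⟨N, hNsub, hNm, hNnull⟩ : ∃ N : Set (ℝ × ℝ),
        ({z | f z ≠ g z} ∩ Ω ⊆ N) ∧ MeasurableSet N ∧ μ N = 0 := by
      refine ⟨toMeasurable (μ.restrict Ω) {z | f z ≠ g z} ∩ Ω,
        inter_subset_inter_left _ (subset_toMeasurable _ _),
        (measurableSet_toMeasurable _ _).inter hΩm, ?_⟩
      rw [← Measure.restrict_apply (measurableSet_toMeasurable _ _),
        measure_toMeasurable]
      exact ae_iff.mp hfg
    have hfg' : ∀ z ∈ Ω, z ∉ N → f z = g z := fun z hz hn => by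
      by_contra h
      exact hn (hNsub ⟨h, hz⟩)
    -- a.e. second-coordinate slices of `N` are Lebesgue-null
    have hslice : ∀ᵐ w ∂ν, volume ((fun x => (x, w)) ⁻¹' N) = 0 := by
      have h1 : μ N = ∫⁻ w, volume ((fun x => (x, w)) ⁻¹' N) ∂ν := by
        rw [hμdef]
        exact Measure.prod_apply_symm hNm
      rw [hNnull] at h1
      exact (lintegral_eq_zero_iff (measurable_measure_prodMk_right hNm)).mp h1.symm
    -- the diagonal `x = t v` is null
    have hZ1 : ∀ᵐ z ∂μ, z.1 ≠ t * z.2 := by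
      have hSm : MeasurableSet {z : ℝ × ℝ | z.1 = t * z.2} :=
        measurableSet_eq_fun measurable_fst (measurable_const.mul measurable_snd)
      have h0 : μ {z : ℝ × ℝ | z.1 = t * z.2} = 0 := by
        rw [hμdef, Measure.prod_apply_symm hSm]
        have hz : ∀ w : ℝ, volume ((fun x => (x, w)) ⁻¹' {z : ℝ × ℝ | z.1 = t * z.2}) = 0 := by
          intro w
          have : ((fun x => (x, w)) ⁻¹' {z : ℝ × ℝ | z.1 = t * z.2}) = {t * w} := by
            ext x; simp [Set.mem_preimage]
          rw [this]
          exact measure_singleton _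
        rw [lintegral_congr hz, lintegral_zero]
      exact measure_eq_zero_iff_ae_notMem.mp h0
    -- null preimages under shear maps
    have hshift : ∀ β γ : ℝ,
        μ ((fun z : ℝ × ℝ => (z.1 + β * z.2 + γ, z.2)) ⁻¹' N) = 0 := by
      intro β γ
      have hm' : Measurable fun z : ℝ × ℝ => (z.1 + β * z.2 + γ, z.2) :=
        ((measurable_fst.add (measurable_const.mul measurable_snd)).add
          measurable_const).prodMk measurable_snd
      rw [hμdef, Measure.prod_apply_symm (hNm.preimage hm')]
      have h0 : ∫⁻ w, volume ((fun x => (x, w)) ⁻¹'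
          ((fun z : ℝ × ℝ => (z.1 + β * z.2 + γ, z.2)) ⁻¹' N)) ∂ν = ∫⁻ _, 0 ∂ν := by
        refine lintegral_congr_ae (hslice.mono fun w hw => ?_)
        show volume ((fun x => (x, w)) ⁻¹'
          ((fun z : ℝ × ℝ => (z.1 + β * z.2 + γ, z.2)) ⁻¹' N)) = 0
        have hsub : ((fun x => (x, w)) ⁻¹'
            ((fun z : ℝ × ℝ => (z.1 + β * z.2 + γ, z.2)) ⁻¹' N))
            = (fun x : ℝ => 1 * x + (β * w + γ)) ⁻¹' ((fun x => (x, w)) ⁻¹' N) := by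
          ext x
          simp only [Set.mem_preimage]
          rw [show (1:ℝ) * x + (β * w + γ) = x + β * w + γ by ring]
        rw [hsub]
        exact volume_affine_preimage_null one_ne_zero _ hw
      rw [h0, lintegral_zero]
    have hZ2 : ∀ᵐ z ∂μ, (z.1 - t * z.2, z.2) ∉ N := by
      have h := hshift (-t) 0
      have he : (fun z : ℝ × ℝ => (z.1 + (-t) * z.2 + 0, z.2))
          = fun z : ℝ × ℝ => (z.1 - t * z.2, z.2) := by
        funext z
        rw [show z.1 + (-t) * z.2 + 0 = z.1 - t * z.2 by ring]
      rw [he] at h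
      exact measure_eq_zero_iff_ae_notMem.mp h
    have hZ3 : ∀ᵐ z ∂μ, (1 + z.1 - t * z.2, z.2) ∉ N := by
      have h := hshift (-t) 1
      have he : (fun z : ℝ × ℝ => (z.1 + (-t) * z.2 + 1, z.2))
          = fun z : ℝ × ℝ => (1 + z.1 - t * z.2, z.2) := by
        funext z
        rw [show z.1 + (-t) * z.2 + 1 = 1 + z.1 - t * z.2 by ring]
      rw [he] at h
      exact measure_eq_zero_iff_ae_notMem.mp h
    -- the kernel-part bad set is null
    set R : Set (ℝ × ℝ) := {z : ℝ × ℝ | z.2 ∈ V ∧ 0 < z.1 ∧ z.1 < t * z.2} with hRdef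
    have hRm : MeasurableSet R :=
      (hVm.preimage measurable_snd).inter
        ((measurableSet_lt measurable_const measurable_fst).inter
          (measurableSet_lt measurable_fst (measurable_const.mul measurable_snd)))
    have hηm : Measurable fun zw : (ℝ × ℝ) × ℝ =>
        (1 + zw.1.1 * zw.2 * zw.1.2⁻¹ - t * zw.2, zw.2) :=
      ((measurable_const.add ((measurable_fst.fst.mul measurable_snd).mul
        measurable_fst.snd.inv)).sub (measurable_const.mul measurable_snd)).prodMk
        measurable_snd
    set Q : Set ((ℝ × ℝ) × ℝ) :=
      (fun zw : (ℝ × ℝ) × ℝ => (1 + zw.1.1 * zw.2 * zw.1.2⁻¹ - t * zw.2, zw.2)) ⁻¹' N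
      with hQdef
    have hQm : MeasurableSet Q := hNm.preimage hηm
    have hQ0 : ((μ.restrict R).prod (ν.restrict V)) Q = 0 := by
      rw [Measure.prod_apply_symm hQm]
      have h0 : ∀ᵐ w ∂(ν.restrict V),
          (μ.restrict R) ((fun z => (z, w)) ⁻¹' Q) = 0 := by
        filter_upwards [ae_restrict_of_ae hslice, ae_restrict_mem hVm] with w hw1 hw2
        have hw0 : 0 < w := hVpos w hw2
        rw [Measure.restrict_apply' hRm, hμdef]
        have hsm : MeasurableSet (((fun z : ℝ × ℝ => (z, w)) ⁻¹' Q) ∩ R) :=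
          (hQm.preimage (measurable_id.prodMk measurable_const)).inter hRm
        rw [Measure.prod_apply_symm hsm]
        have hz : ∀ v : ℝ, volume ((fun x => (x, v)) ⁻¹'
            ((((fun z : ℝ × ℝ => (z, w)) ⁻¹' Q) ∩ R))) = 0 := by
          intro v
          by_cases hvV : v ∈ V
          · have hv0 : 0 < v := hVpos v hvV
            have hsub : ((fun x => (x, v)) ⁻¹' ((((fun z : ℝ × ℝ => (z, w)) ⁻¹' Q) ∩ R)))
                ⊆ (fun x : ℝ => (w * v⁻¹) * x + (1 - t * w)) ⁻¹'
                  ((fun x => (x, w)) ⁻¹' N) := by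
              intro x hx
              have h1 := hx.1
              simp only [Set.mem_preimage, hQdef] at h1 ⊢
              rw [show (w * v⁻¹) * x + (1 - t * w) = 1 + x * w * v⁻¹ - t * w by ring]
              exact h1
            exact measure_mono_null hsub
              (volume_affine_preimage_null (mul_pos hw0 (inv_pos.2 hv0)).ne' _ hw1)
          · have hsub : ((fun x => (x, v)) ⁻¹' ((((fun z : ℝ × ℝ => (z, w)) ⁻¹' Q) ∩ R)))
                = ∅ := by
              ext x
              simp only [Set.mem_preimage, Set.mem_inter_iff, Set.mem_empty_iff_false,
                iff_false, not_and]
              intro _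
              rw [hRdef]
              intro hxR
              exact hvV hxR.1
            rw [hsub]
            exact measure_empty
        rw [lintegral_congr hz, lintegral_zero]
      calc ∫⁻ w, (μ.restrict R) ((fun z => (z, w)) ⁻¹' Q) ∂(ν.restrict V)
          = ∫⁻ _, 0 ∂(ν.restrict V) := lintegral_congr_ae h0
        _ = 0 := lintegral_zero
    have hZ4 : ∀ᵐ z ∂μ, z ∈ R →
        (ν.restrict V) {w : ℝ | (1 + z.1 * w * z.2⁻¹ - t * w, w) ∈ N} = 0 := by
      refine (ae_restrict_iff' hRm).mp ?_
      have h := Measure.measure_ae_null_of_prod_null hQ0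
      refine h.mono fun z hz => ?_
      have : (Prod.mk z ⁻¹' Q) = {w : ℝ | (1 + z.1 * w * z.2⁻¹ - t * w, w) ∈ N} := rfl
      rw [← this]
      exact hz
    -- put everything together
    filter_upwards [ae_restrict_mem hΩm, ae_restrict_of_ae hZ1, ae_restrict_of_ae hZ2,
      ae_restrict_of_ae hZ3, ae_restrict_of_ae hZ4] with z hzΩ hz1 hz2 hz3 hz4
    have hx : z.1 ∈ Ioo (0:ℝ) 1 := hzΩ.1
    have hv : z.2 ∈ V := hzΩ.2
    have hv0 : 0 < z.2 := hVpos _ hv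
    simp only [Tt]
    by_cases hcase : t * z.2 < z.1
    · rw [if_pos hcase, if_pos hcase]
      refine hfg' _ (Set.mem_prod.mpr ⟨Set.mem_Ioo.mpr ⟨?_, ?_⟩, hv⟩) hz2
      · show 0 < z.1 - t * z.2
        linarith
      · show z.1 - t * z.2 < 1
        have := htv0 _ hv
        have := hx.2
        linarith
    · rw [if_neg hcase, if_neg hcase]
      have hxlt : z.1 < t * z.2 := lt_of_le_of_ne (not_lt.mp hcase) hz1
      have hzR : z ∈ R := ⟨hv, hx.1, hxlt⟩
      refine integral_congr_ae ?_
      show ∀ᵐ w ∂(ell p q k ν V z.2),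
        f (1 + z.1 * w * z.2⁻¹ - t * w, w) = g (1 + z.1 * w * z.2⁻¹ - t * w, w)
      simp only [ell]
      rw [ae_add_measure_iff]
      constructor
      · refine Filter.Eventually.filter_mono
          ((withDensity_absolutelyContinuous (ν.restrict V) _).ae_le) ?_
        have hbase : ∀ᵐ w ∂(ν.restrict V),
            f (1 + z.1 * w * z.2⁻¹ - t * w, w) = g (1 + z.1 * w * z.2⁻¹ - t * w, w) := by
          filter_upwards [ae_restrict_mem hVm,
            measure_eq_zero_iff_ae_notMem.mp (hz4 hzR)] with w hwV hwN
          have hw0 : 0 < w := hVpos w hwV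
          have htw : t * w < 1 := htv1 w hwV
          have hpos : 0 < z.1 * w * z.2⁻¹ :=
            mul_pos (mul_pos hx.1 hw0) (inv_pos.2 hv0)
          have hlt : z.1 * w * z.2⁻¹ < t * w := by
            have h1 : z.1 * (w * z.2⁻¹) < (t * z.2) * (w * z.2⁻¹) :=
              mul_lt_mul_of_pos_right hxlt (mul_pos hw0 (inv_pos.2 hv0))
            calc z.1 * w * z.2⁻¹ = z.1 * (w * z.2⁻¹) := by ring
              _ < (t * z.2) * (w * z.2⁻¹) := h1
              _ = t * w := by field_simp
          refine hfg' _ (Set.mem_prod.mpr ⟨Set.mem_Ioo.mpr ⟨?_, ?_⟩, hwV⟩) hwN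
          · show 0 < 1 + z.1 * w * z.2⁻¹ - t * w
            linarith
          · show 1 + z.1 * w * z.2⁻¹ - t * w < 1
            linarith
        exact hbase
      · refine Measure.ae_smul_measure ?_ _
        rw [MeasureTheory.ae_dirac_eq]
        refine Filter.eventually_pure.mpr ?_
        have he : (1 : ℝ) + z.1 * z.2 * z.2⁻¹ - t * z.2 = 1 + z.1 - t * z.2 := by
          rw [mul_assoc, mul_inv_cancel₀ hv0.ne', mul_one]
        rw [he]
        have htv : t * z.2 < 1 := htv1 _ hv
        refine hfg' _ (Set.mem_prod.mpr ⟨Set.mem_Ioo.mpr ⟨?_, ?_⟩, hv⟩) hz3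
        · show 0 < 1 + z.1 - t * z.2
          have := hx.1
          linarith
        · show 1 + z.1 - t * z.2 < 1
          linarith [hxlt]
  constructor
  · filter_upwards [hA] with z hz
    rw [hz]
    exact hTgnn z
  · calc ∫ z in Ω, |Tt p q k ν V t f z| ∂μ
        = ∫ z in Ω, |Tt p q k ν V t g z| ∂μ :=
          integral_congr_ae (hA.mono fun z hz => by
            show |Tt p q k ν V t f z| = |Tt p q k ν V t g z|
            rw [hz])
      _ = ∫ z in Ω, (G z).toReal ∂μ :=
          integral_congr_ae (hTg_eq.mono fun z hz => by
            show |Tt p q k ν V t g z| = (G z).toReal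
            rw [abs_of_nonneg (hTgnn z), hz])
      _ = (∫⁻ z in Ω, G z ∂μ).toReal := integral_toReal (hG.aemeasurable) hGfin
      _ = (∫⁻ z in Ω, F z ∂μ).toReal := by rw [key]
      _ = ∫ z in Ω, g z ∂μ :=
          (integral_eq_lintegral_of_nonneg_ae (ae_of_all _ fun z => hg0 z)
            hg.aestronglyMeasurable).symm
      _ = ∫ z in Ω, |f z| ∂μ := by
          refine integral_congr_ae ?_
          filter_upwards [hfg, hfnn] with z h1 h2
          rw [← h1, abs_of_nonneg h2]
end

section
/- Assume p + q = 1. Let f ∈ L¹(Ω,μ) with f ≥ 0 μ-a.e. and let f̃ be a boundary extension of f. Then for every t ≥ 0 the function (x,v) ↦ f̃(x − tv, v) is nonnegative μ-a.e. on Ω and ∫_Ω f̃(x − tv, v) μ(d(x,v)) = ∫_Ω f dμ. -/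
open MeasureTheory Set Filter Topology
open scoped ENNReal

/-- The sets `Ω₀ = Ω = (0,1) × V` and, for `i ≥ 1`,
`Ω_i = {(x,v) : v ∈ V, −i v b⁻¹ < x ≤ −(i−1) v b⁻¹}`. -/
def Omi (b : ℝ) (V : Set ℝ) : ℕ → Set (ℝ × ℝ)
  | 0 => (Set.Ioo (0 : ℝ) 1) ×ˢ V
  | (i + 1) =>
      {z : ℝ × ℝ | z.2 ∈ V ∧ -(((i : ℝ) + 1) * z.2 * b⁻¹) < z.1 ∧
        z.1 ≤ -((i : ℝ) * z.2 * b⁻¹)}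

/-- `Γ_j = ⋃_{i=0}^{j} Ω_i`. -/
def Gam (b : ℝ) (V : Set ℝ) (j : ℕ) : Set (ℝ × ℝ) :=
  ⋃ i ∈ Finset.range (j + 1), Omi b V i

/-- A measurable function `f̃ : Ω̃ → ℝ` (modelled on all of `ℝ × ℝ`, with
`Ω̃ = (−∞,1) × V`), μ-integrable on each `Γ_j`, is a boundary extension of `f` if
`f̃ = f` a.e. on `{x > 0}` and, a.e. on `{x ≤ 0}`, the function
`w ↦ f̃(1 + x w v⁻¹, w)` is `ℓ(·,v)`-integrable with
`f̃(x,v) = ∫_V f̃(1 + x w v⁻¹, w) ℓ(dw,v)`. -/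
def IsBoundaryExtension (b p q : ℝ) (k : ℝ → ℝ → ℝ) (ν : Measure ℝ) (V : Set ℝ)
    (f ftil : ℝ × ℝ → ℝ) : Prop :=
  Measurable ftil ∧
  (∀ j : ℕ, IntegrableOn ftil (Gam b V j) ((volume : Measure ℝ).prod ν)) ∧
  (∀ᵐ z ∂(((volume : Measure ℝ).prod ν).restrict ((Set.Iio (1 : ℝ)) ×ˢ V)),
    0 < z.1 → ftil z = f z) ∧
  (∀ᵐ z ∂(((volume : Measure ℝ).prod ν).restrict ((Set.Iio (1 : ℝ)) ×ˢ V)),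
    z.1 ≤ 0 →
      Integrable (fun w => ftil (1 + z.1 * w * z.2⁻¹, w)) (ell p q k ν V z.2) ∧
      ftil z = ∫ w, ftil (1 + z.1 * w * z.2⁻¹, w) ∂(ell p q k ν V z.2))


lemma slice_null (ν : Measure ℝ) [SigmaFinite ν] {N : Set (ℝ × ℝ)}
    (h : ((volume : Measure ℝ).prod ν) N = 0) :
    ∀ᵐ v ∂ν, volume {x : ℝ | (x, v) ∈ N} = 0 := by
  obtain ⟨N', hNN', hN'm, hN'0⟩ := exists_measurable_superset_of_null h
  have hswap : (ν.prod (volume : Measure ℝ)) (Prod.swap ⁻¹' N') = 0 := by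
    have h1 : ν.prod (volume : Measure ℝ) =
        Measure.map Prod.swap ((volume : Measure ℝ).prod ν) := (Measure.prod_swap).symm
    rw [h1, Measure.map_apply measurable_swap (measurable_swap hN'm)]
    have : Prod.swap ⁻¹' (Prod.swap ⁻¹' N') = N' := by ext z; simp
    rw [this]; exact hN'0
  have := Measure.measure_ae_null_of_prod_null hswap
  filter_upwards [this] with v hv
  have hv' : volume {x : ℝ | (x, v) ∈ N'} = 0 := by
    simpa [Set.preimage] using hv
  exact measure_mono_null (fun x hx => hNN' hx) hv'

lemma affine_preimage_null {N : Set ℝ} (hNm : MeasurableSet N) (hN : volume N = 0)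
    {m : ℝ} (hm : m ≠ 0) (c : ℝ) : volume {x : ℝ | c + x * m ∈ N} = 0 := by
  have h1 : {x : ℝ | c + x * m ∈ N} = (fun x : ℝ => m * x) ⁻¹' ((fun y : ℝ => c + y) ⁻¹' N) := by
    ext x; simp [Set.mem_preimage, mul_comm]
  rw [h1]
  have h2 : volume ((fun y : ℝ => c + y) ⁻¹' N) = 0 := by
    rw [measure_preimage_add]; exact hN
  have h3 : MeasurableSet ((fun y : ℝ => c + y) ⁻¹' N) := hNm.preimage (measurable_const_add c)
  rw [Real.volume_preimage_mul_left hm _]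
  · simp [h2]

lemma pullback_null (ν : Measure ℝ) [SigmaFinite ν] {V : Set ℝ} (hVm : MeasurableSet V)
    (hV0 : ∀ v ∈ V, (0:ℝ) < v) {S : Set (ℝ × ℝ)} (hSm : MeasurableSet S)
    (hS : ((volume : Measure ℝ).prod ν) S = 0) (c : ℝ) :
    ∀ᵐ z ∂((volume : Measure ℝ).prod ν), ∀ᵐ w ∂ν,
      z.2 ∈ V → w ∈ V → (c + z.1 * w * z.2⁻¹, w) ∉ S := by
  set B : Set ((ℝ × ℝ) × ℝ) :=
    {q | q.1.2 ∈ V ∧ q.2 ∈ V ∧ (c + q.1.1 * q.2 * q.1.2⁻¹, q.2) ∈ S} with hB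
  have hBm : MeasurableSet B := by
    apply MeasurableSet.inter
    · exact (measurable_snd.comp measurable_fst) hVm
    apply MeasurableSet.inter
    · exact measurable_snd hVm
    · exact (((measurable_const.add (((measurable_fst.comp measurable_fst).mul
        measurable_snd).mul ((measurable_snd.comp measurable_fst).inv))).prodMk
        measurable_snd)) hSm
  have hslice := slice_null ν hS
  have hBnull : (((volume : Measure ℝ).prod ν).prod ν) B = 0 := by
    rw [Measure.prod_apply_symm hBm]
    have : ∀ᵐ w ∂ν, ((volume : Measure ℝ).prod ν) ((fun z : ℝ × ℝ => (z, w)) ⁻¹' B) = 0 := by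
      filter_upwards [hslice] with w hw
      by_cases hwV : w ∈ V
      · have hpre : (fun z : ℝ × ℝ => (z, w)) ⁻¹' B =
            {z : ℝ × ℝ | z.2 ∈ V ∧ w ∈ V ∧ (c + z.1 * w * z.2⁻¹, w) ∈ S} := rfl
        rw [hpre]
        have hm2 : MeasurableSet {z : ℝ × ℝ | z.2 ∈ V ∧ w ∈ V ∧ (c + z.1 * w * z.2⁻¹, w) ∈ S} := by
          apply MeasurableSet.inter
          · exact measurable_snd hVm
          apply MeasurableSet.inter
          · exact MeasurableSet.const _
          · exact (((measurable_const.add ((measurable_fst.mul measurable_const).mul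
              measurable_snd.inv)).prodMk measurable_const)) hSm
        rw [Measure.prod_apply_symm hm2]
        have : ∀ᵐ v ∂ν, volume ((fun x : ℝ => (x, v)) ⁻¹'
            {z : ℝ × ℝ | z.2 ∈ V ∧ w ∈ V ∧ (c + z.1 * w * z.2⁻¹, w) ∈ S}) = 0 := by
          apply Eventually.of_forall
          intro v
          by_cases hvV : v ∈ V
          · have : (fun x : ℝ => (x, v)) ⁻¹'
                {z : ℝ × ℝ | z.2 ∈ V ∧ w ∈ V ∧ (c + z.1 * w * z.2⁻¹, w) ∈ S} ⊆
                {x : ℝ | c + x * (w * v⁻¹) ∈ {u : ℝ | (u, w) ∈ S}} := by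
              intro x hx
              simp only [Set.mem_preimage, Set.mem_setOf_eq] at hx ⊢
              have : c + x * (w * v⁻¹) = c + x * w * v⁻¹ := by ring
              rw [this]; exact hx.2.2
            apply measure_mono_null this
            apply affine_preimage_null
            · exact (measurable_prodMk_right hSm : MeasurableSet {u : ℝ | (u, w) ∈ S})
            · exact hw
            · have hw0 := hV0 w hwV
              have hv0 := hV0 v hvV
              positivity
          · have : (fun x : ℝ => (x, v)) ⁻¹'
                {z : ℝ × ℝ | z.2 ∈ V ∧ w ∈ V ∧ (c + z.1 * w * z.2⁻¹, w) ∈ S} = ∅ := by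
              ext x; simp [hvV]
            rw [this]; simp
        calc ∫⁻ v, volume ((fun x : ℝ => (x, v)) ⁻¹'
              {z : ℝ × ℝ | z.2 ∈ V ∧ w ∈ V ∧ (c + z.1 * w * z.2⁻¹, w) ∈ S}) ∂ν
            = ∫⁻ _, 0 ∂ν := lintegral_congr_ae this
          _ = 0 := lintegral_zero
      · have : (fun z : ℝ × ℝ => (z, w)) ⁻¹' B = ∅ := by
          ext z; simp [hB, hwV]
        rw [this]; simp
    calc ∫⁻ w, ((volume : Measure ℝ).prod ν) ((fun z : ℝ × ℝ => (z, w)) ⁻¹' B) ∂ν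
        = ∫⁻ _, 0 ∂ν := lintegral_congr_ae this
      _ = 0 := lintegral_zero
  have hae : ∀ᵐ q ∂(((volume : Measure ℝ).prod ν).prod ν), q ∉ B := by
    rw [ae_iff]; simpa using hBnull
  have := Measure.ae_ae_of_ae_prod hae
  filter_upwards [this] with z hz
  filter_upwards [hz] with w hw h1 h2 h3
  exact hw ⟨h1, h2, h3⟩

lemma shift_null (ν : Measure ℝ) [SigmaFinite ν] {N : Set (ℝ × ℝ)}
    (h : ((volume : Measure ℝ).prod ν) N = 0) (c : ℝ) :
    ((volume : Measure ℝ).prod ν) {z : ℝ × ℝ | (z.1 + c, z.2) ∈ N} = 0 := by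
  obtain ⟨N', hNN', hN'm, hN'0⟩ := exists_measurable_superset_of_null h
  apply measure_mono_null (show {z : ℝ × ℝ | (z.1 + c, z.2) ∈ N} ⊆
    {z : ℝ × ℝ | (z.1 + c, z.2) ∈ N'} from fun z hz => hNN' hz)
  have hm : MeasurableSet {z : ℝ × ℝ | (z.1 + c, z.2) ∈ N'} :=
    ((measurable_fst.add_const c).prodMk measurable_snd) hN'm
  rw [Measure.prod_apply_symm hm]
  have hslice := slice_null ν hN'0
  have : ∀ᵐ v ∂ν, volume ((fun x : ℝ => (x, v)) ⁻¹' {z : ℝ × ℝ | (z.1 + c, z.2) ∈ N'}) = 0 := by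
    filter_upwards [hslice] with v hv
    have heq : (fun x : ℝ => (x, v)) ⁻¹' {z : ℝ × ℝ | (z.1 + c, z.2) ∈ N'} =
        (fun x : ℝ => x + c) ⁻¹' {x : ℝ | (x, v) ∈ N'} := rfl
    rw [heq, measure_preimage_add_right]
    exact hv
  calc ∫⁻ v, volume ((fun x : ℝ => (x, v)) ⁻¹' {z : ℝ × ℝ | (z.1 + c, z.2) ∈ N'}) ∂ν
      = ∫⁻ _, 0 ∂ν := lintegral_congr_ae this
    _ = 0 := lintegral_zero


lemma lintegral_comp_affine (g : ℝ → ℝ≥0∞) (hg : Measurable g) {m : ℝ} (hm : m ≠ 0) (c : ℝ)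
    {s : Set ℝ} (hs : MeasurableSet s) :
    ∫⁻ x in (fun x : ℝ => c + x * m) ⁻¹' s, g (c + x * m) =
      ENNReal.ofReal |m⁻¹| * ∫⁻ y in s, g y := by
  set φ : ℝ → ℝ := fun x => c + x * m with hφ
  have hφm : Measurable φ := (measurable_id.mul_const m).const_add c
  have hmap : Measure.map φ (volume : Measure ℝ) = ENNReal.ofReal |m⁻¹| • volume := by
    have h1 : φ = (fun y : ℝ => c + y) ∘ (fun x : ℝ => m * x) := by
      funext x; simp [hφ, mul_comm]
    rw [h1, ← Measure.map_map (measurable_const_add c) (measurable_const_mul m),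
      Real.map_volume_mul_left hm, Measure.map_smul]
    congr 1
    exact map_add_left_eq_self volume c
  have hres : Measure.map φ ((volume : Measure ℝ).restrict (φ ⁻¹' s)) =
      (ENNReal.ofReal |m⁻¹| • (volume : Measure ℝ)).restrict s := by
    rw [← Measure.restrict_map hφm hs, hmap]
  calc ∫⁻ x in φ ⁻¹' s, g (φ x) = ∫⁻ y, g y ∂(Measure.map φ ((volume : Measure ℝ).restrict (φ ⁻¹' s))) := by
        rw [lintegral_map hg hφm]
    _ = ∫⁻ y, g y ∂((ENNReal.ofReal |m⁻¹| • (volume : Measure ℝ)).restrict s) := by rw [hres]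
    _ = ENNReal.ofReal |m⁻¹| * ∫⁻ y in s, g y := by
        rw [Measure.restrict_smul, lintegral_smul_measure, smul_eq_mul]

lemma measC {g : ℝ × ℝ → ℝ≥0∞} (hg : Measurable g) {α β : ℝ → ℝ}
    (hα : Measurable α) (hβ : Measurable β) :
    Measurable fun v => ∫⁻ u in Ioc (α v) (β v), g (u, v) := by
  have h1 : ∀ v, ∫⁻ u in Ioc (α v) (β v), g (u, v) =
      ∫⁻ u, ({q : ℝ × ℝ | α q.2 < q.1 ∧ q.1 ≤ β q.2}.indicator g) (u, v) := by
    intro v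
    rw [← lintegral_indicator measurableSet_Ioc]
    refine lintegral_congr fun u => ?_
    simp only [Set.indicator_apply, Set.mem_Ioc, Set.mem_setOf_eq]
  simp_rw [h1]
  apply Measurable.lintegral_prod_left'
  apply Measurable.indicator hg
  exact measurableSet_lt (hα.comp measurable_snd) measurable_fst |>.inter
    (measurableSet_le measurable_fst (hβ.comp measurable_snd))

lemma setLIntegral_prod_eq (ν : Measure ℝ) [SigmaFinite ν] {g : ℝ × ℝ → ℝ≥0∞}
    (hg : Measurable g) {S : Set (ℝ × ℝ)} (hS : MeasurableSet S) :
    ∫⁻ z in S, g z ∂((volume : Measure ℝ).prod ν) =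
      ∫⁻ v, (∫⁻ x in {x : ℝ | (x, v) ∈ S}, g (x, v)) ∂ν := by
  have hin : ∀ v : ℝ, (∫⁻ x, S.indicator g (x, v)) =
      ∫⁻ x in {x : ℝ | (x, v) ∈ S}, g (x, v) := by
    intro v
    rw [← lintegral_indicator (s := {x : ℝ | (x, v) ∈ S}) (measurable_prodMk_right hS)]
    refine lintegral_congr fun x => ?_
    by_cases h : (x, v) ∈ S <;> simp [Set.indicator_apply, h]
  rw [← lintegral_indicator hS]
  rw [lintegral_prod_symm _ (hg.indicator hS).aemeasurable]
  exact lintegral_congr hin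

lemma Omi_measurable {b : ℝ} {V : Set ℝ} (hVm : MeasurableSet V) (i : ℕ) :
    MeasurableSet (Omi b V i) := by
  cases i with
  | zero => exact measurableSet_Ioo.prod hVm
  | succ i =>
    refine MeasurableSet.inter (measurable_snd hVm) (MeasurableSet.inter ?_ ?_)
    · exact measurableSet_lt (measurable_const.mul measurable_snd |>.mul measurable_const).neg
        measurable_fst
    · exact measurableSet_le measurable_fst
        ((measurable_const.mul measurable_snd |>.mul measurable_const).neg)

lemma Gam_measurable {b : ℝ} {V : Set ℝ} (hVm : MeasurableSet V) (j : ℕ) :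
    MeasurableSet (Gam b V j) := by
  exact MeasurableSet.biUnion (Finset.range (j + 1)).countable_toSet
    fun i _ => Omi_measurable hVm i

lemma Gam_succ (b : ℝ) (V : Set ℝ) (j : ℕ) :
    Gam b V (j + 1) = Gam b V j ∪ Omi b V (j + 1) := by
  unfold Gam
  rw [Finset.range_add_one]
  simp [Set.biUnion_insert, Set.union_comm]

lemma mem_Gam {b : ℝ} (hb : 0 < b) {V : Set ℝ} {x v : ℝ} (hv : v ∈ V) (hv0 : 0 < v)
    {j : ℕ} (h1 : -((j : ℝ) * v * b⁻¹) < x) (h2 : x < 1) : (x, v) ∈ Gam b V j := by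
  by_cases hx : 0 < x
  · exact Set.mem_biUnion (Finset.mem_range.mpr (by omega))
      (show (x, v) ∈ Omi b V 0 from ⟨⟨hx, h2⟩, hv⟩)
  · push_neg at hx
    have hxnn : 0 ≤ -x * b / v := by
      apply div_nonneg _ (le_of_lt hv0)
      nlinarith
    set y : ℝ := -x * b / v with hy
    have hyj : y < (j : ℝ) := by
      rw [hy, div_lt_iff₀ hv0]
      rw [show -((j : ℝ) * v * b⁻¹) = (-((j : ℝ) * v)) / b by field_simp] at h1
      rw [div_lt_iff₀ hb] at h1
      linarith
    set i : ℕ := ⌊y⌋₊ with hi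
    have hiy : (i : ℝ) ≤ y := Nat.floor_le hxnn
    have hyi : y < (i : ℝ) + 1 := Nat.lt_floor_add_one y
    have h3 : y * v = -x * b := by rw [hy, div_mul_cancel₀ _ (ne_of_gt hv0)]
    have hij : i + 1 ≤ j := by
      have : (i : ℕ) < j := (Nat.floor_lt hxnn).mpr (by exact_mod_cast hyj)
      omega
    have hmem : i + 1 ∈ Finset.range (j + 1) := Finset.mem_range.mpr (by omega)
    refine Set.mem_biUnion hmem (show (x, v) ∈ Omi b V (i + 1) from ⟨hv, ?_, ?_⟩)
    · show -(((i : ℝ) + 1) * v * b⁻¹) < x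
      rw [show -(((i : ℝ) + 1) * v * b⁻¹) = (-(((i : ℝ) + 1) * v)) / b by field_simp,
        div_lt_iff₀ hb]
      nlinarith [mul_lt_mul_of_pos_right hyi hv0]
    · show x ≤ -((i : ℝ) * v * b⁻¹)
      rw [show -((i : ℝ) * v * b⁻¹) = (-((i : ℝ) * v)) / b by field_simp,
        le_div_iff₀ hb]
      nlinarith [mul_le_mul_of_nonneg_right hiy (le_of_lt hv0)]

lemma Omi_subset_Iio {b : ℝ} (hb : 0 < b) {V : Set ℝ} (hV0 : ∀ v ∈ V, (0:ℝ) < v) (i : ℕ) :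
    Omi b V i ⊆ (Set.Iio (1 : ℝ)) ×ˢ V := by
  cases i with
  | zero => exact fun z hz => ⟨Set.mem_Iio.2 hz.1.2, hz.2⟩
  | succ i =>
    rintro z ⟨hzV, _, h2⟩
    refine ⟨Set.mem_Iio.2 ?_, hzV⟩
    have hv0 := hV0 z.2 hzV
    have : (0:ℝ) ≤ (i : ℝ) * z.2 * b⁻¹ := by positivity
    linarith

lemma Gam_subset_Iio {b : ℝ} (hb : 0 < b) {V : Set ℝ} (hV0 : ∀ v ∈ V, (0:ℝ) < v) (j : ℕ) :
    Gam b V j ⊆ (Set.Iio (1 : ℝ)) ×ˢ V := by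
  intro z hz
  rw [Gam, Set.mem_iUnion₂] at hz
  obtain ⟨i, _, hi⟩ := hz
  exact Omi_subset_Iio hb hV0 i hi

theorem stmt10
    (a b p q : ℝ) (ha : 0 ≤ a) (hab : a < b)
    (hp : 0 ≤ p) (hq : 0 ≤ q) (hpq : 0 < p + q)
    (V : Set ℝ) (hV : V ⊆ Set.Ioo a b) (hVm : MeasurableSet V)
    (ν : Measure ℝ) [SigmaFinite ν]
    (k : ℝ → ℝ → ℝ) (hkm : Measurable (Function.uncurry k))
    (hknn : ∀ w v : ℝ, 0 ≤ k w v)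
    (hk1 : ∀ w ∈ V, ∫ v in V, k w v ∂ν = 1)
    (f ftil : ℝ × ℝ → ℝ)
    (hf : IntegrableOn f ((Set.Ioo (0 : ℝ) 1) ×ˢ V) ((volume : Measure ℝ).prod ν))
    (hext : IsBoundaryExtension b p q k ν V f ftil)
    (hpq1 : p + q = 1)
    (hfnn : ∀ᵐ z ∂(((volume : Measure ℝ).prod ν).restrict ((Set.Ioo (0 : ℝ) 1) ×ˢ V)),
      0 ≤ f z)
    (t : ℝ) (ht : 0 ≤ t) :
    (∀ᵐ z ∂(((volume : Measure ℝ).prod ν).restrict ((Set.Ioo (0 : ℝ) 1) ×ˢ V)),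
      0 ≤ ftil (z.1 - t * z.2, z.2)) ∧
    ∫ z in (Set.Ioo (0 : ℝ) 1) ×ˢ V, ftil (z.1 - t * z.2, z.2)
        ∂((volume : Measure ℝ).prod ν)
      = ∫ z in (Set.Ioo (0 : ℝ) 1) ×ˢ V, f z ∂((volume : Measure ℝ).prod ν) := by
  classical
  set M := ((volume : Measure ℝ).prod ν) with hM
  have hb : (0:ℝ) < b := lt_of_le_of_lt ha hab
  have hV0 : ∀ v ∈ V, (0:ℝ) < v := fun v hv => lt_of_le_of_lt ha (hV hv).1
  have hVb : ∀ v ∈ V, v < b := fun v hv => (hV hv).2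
  obtain ⟨hmf, hGint, hae_eq, hae_bd⟩ := hext
  set g : ℝ × ℝ → ℝ≥0∞ := fun z => ENNReal.ofReal (ftil z) with hg
  have hmg : Measurable g := ENNReal.measurable_ofReal.comp hmf
  have hbad : MeasurableSet {z : ℝ × ℝ | ftil z < 0} := measurableSet_lt hmf measurable_const
  -- Stage 2: nonnegativity on each Gam
  have NGam : ∀ j : ℕ, M (Gam b V j ∩ {z : ℝ × ℝ | ftil z < 0}) = 0 := by
    intro j
    induction j with
    | zero =>
      have hG0 : Gam b V 0 = (Set.Ioo (0:ℝ) 1) ×ˢ V := by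
        unfold Gam
        simp [Omi]
      rw [hG0]
      have h1 : ∀ᵐ z ∂(M.restrict ((Set.Ioo (0:ℝ) 1) ×ˢ V)), 0 ≤ ftil z := by
        have hsub : ((Set.Ioo (0:ℝ) 1) ×ˢ V) ⊆ (Set.Iio (1:ℝ)) ×ˢ V :=
          fun z hz => ⟨hz.1.2, hz.2⟩
        have h2 := ae_mono (Measure.restrict_mono hsub le_rfl) hae_eq
        filter_upwards [h2, hfnn, ae_restrict_mem (measurableSet_Ioo.prod hVm)]
          with z hz1 hz2 hz3
        rw [hz1 hz3.1.1]; exact hz2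
      have h3 := (ae_restrict_iff' (measurableSet_Ioo.prod hVm)).mp h1
      rw [ae_iff] at h3
      apply measure_mono_null _ h3
      intro z hz
      simp only [Set.mem_setOf_eq]
      exact fun h => absurd (h hz.1) (not_le.2 hz.2)
    | succ j ih =>
      rw [Gam_succ, Set.union_inter_distrib_right]
      apply measure_union_null ih
      set D := Gam b V j ∩ {z : ℝ × ℝ | ftil z < 0} with hD
      have hDm : MeasurableSet D := (Gam_measurable hVm j).inter hbad
      have H1 := pullback_null ν hVm hV0 hDm ih 1
      have H2 : ∀ᵐ z ∂M, (z.1 + 1, z.2) ∉ D := by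
        have h4 := shift_null ν ih 1
        rw [ae_iff]
        simpa using h4
      have H4 : ∀ᵐ z ∂M, z.1 ≠ 0 := by
        rw [ae_iff]
        have h5 : {z : ℝ × ℝ | ¬ z.1 ≠ 0} = ({(0:ℝ)} : Set ℝ) ×ˢ (Set.univ : Set ℝ) := by
          ext z
          simp only [Set.mem_setOf_eq, not_not, Set.mem_prod, Set.mem_singleton_iff,
            Set.mem_univ, and_true]
        rw [h5, hM, Measure.prod_prod]
        simp
      have hOm : MeasurableSet (Omi b V (j+1)) := Omi_measurable hVm _
      have hsub := Omi_subset_Iio hb hV0 (j+1)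
      have key : ∀ᵐ z ∂(M.restrict (Omi b V (j+1))), 0 ≤ ftil z := by
        have hbd' := ae_mono (Measure.restrict_mono hsub le_rfl) hae_bd
        filter_upwards [hbd', ae_restrict_of_ae H1, ae_restrict_of_ae H2,
          ae_restrict_of_ae H4, ae_restrict_mem hOm] with z hz1 hz2 hz3 hz4 hz5
        obtain ⟨hzV, hzlow, hzhigh⟩ := hz5
        have hv0 := hV0 _ hzV
        have hvb := hVb _ hzV
        have hvb1 : z.2 * b⁻¹ < 1 := by
          have h6 : z.2 * b⁻¹ < b * b⁻¹ := by
            exact mul_lt_mul_of_pos_right hvb (inv_pos.2 hb)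
          rwa [mul_inv_cancel₀ (ne_of_gt hb)] at h6
        have hx0 : z.1 < 0 := by
          refine lt_of_le_of_ne (le_trans hzhigh (neg_nonpos.mpr ?_)) hz4
          have : (0:ℝ) ≤ (j : ℝ) := Nat.cast_nonneg j
          positivity
        obtain ⟨hint, hid⟩ := hz1 (le_of_lt hx0)
        rw [hid]
        apply integral_nonneg_of_ae
        have hellEq : ell p q k ν V z.2 =
            ((ν.restrict V).withDensity
              (fun w => ENNReal.ofReal (p * w * z.2⁻¹ * k w z.2))) +
            (ENNReal.ofReal q) • Measure.dirac z.2 := rfl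
        show ∀ᵐ w ∂(ell p q k ν V z.2), 0 ≤ ftil (1 + z.1 * w * z.2⁻¹, w)
        have hv0' : z.2 ≠ 0 := ne_of_gt hv0
        rw [hellEq, ae_add_measure_iff]
        constructor
        · apply (withDensity_absolutelyContinuous (ν.restrict V) _).ae_le
          filter_upwards [ae_restrict_of_ae hz2, ae_restrict_mem hVm] with w hw hwV
          have hw0 := hV0 _ hwV
          have hwb := hVb _ hwV
          by_contra hneg
          push_neg at hneg
          refine hw hzV hwV ⟨mem_Gam hb hwV hw0 ?_ ?_, hneg⟩
          · have hm0 : (0:ℝ) < w * z.2⁻¹ := by positivity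
            have e1 : -((((j:ℝ)+1) * z.2 * b⁻¹)) * (w * z.2⁻¹) =
                -(((j:ℝ)+1) * w * b⁻¹) := by
              field_simp
            have h8 : -(((j:ℝ)+1) * w * b⁻¹) < z.1 * (w * z.2⁻¹) := by
              rw [← e1]
              exact mul_lt_mul_of_pos_right hzlow hm0
            have hwb1 : w * b⁻¹ < 1 := by
              have h9 : w * b⁻¹ < b * b⁻¹ := mul_lt_mul_of_pos_right hwb (inv_pos.2 hb)
              rwa [mul_inv_cancel₀ (ne_of_gt hb)] at h9
            have e2 : ((j:ℝ)+1) * w * b⁻¹ = (j:ℝ) * w * b⁻¹ + w * b⁻¹ := by ring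
            have e3 : z.1 * w * z.2⁻¹ = z.1 * (w * z.2⁻¹) := by ring
            linarith
          · have h10 : z.1 * (w * z.2⁻¹) < 0 :=
              mul_neg_of_neg_of_pos hx0 (by positivity)
            have e3 : z.1 * w * z.2⁻¹ = z.1 * (w * z.2⁻¹) := by ring
            linarith
        · have hsetm : MeasurableSet {w : ℝ | ¬ (0:ℝ) ≤ ftil (1 + z.1 * w * z.2⁻¹, w)} := by
            simp only [not_le]
            exact measurableSet_lt (hmf.comp
              ((((measurable_id.const_mul z.1).mul_const z.2⁻¹).const_add 1).prodMk
                measurable_id)) measurable_const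
          rw [ae_iff, Measure.smul_apply, Measure.dirac_apply' _ hsetm,
            Set.indicator_of_notMem]
          · simp
          · simp only [Set.mem_setOf_eq, not_not]
            have hzz : z.1 * z.2 * z.2⁻¹ = z.1 := by field_simp
            rw [hzz]
            by_contra hneg
            push_neg at hneg
            apply hz3
            refine ⟨mem_Gam hb hzV hv0 ?_ ?_, ?_⟩
            · have e2 : ((j:ℝ)+1) * z.2 * b⁻¹ = (j:ℝ) * z.2 * b⁻¹ + z.2 * b⁻¹ := by ring
              linarith
            · linarith
            · show ftil (z.1 + 1, z.2) < 0
              rwa [add_comm]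
      have h7 := (ae_restrict_iff' hOm).mp key
      rw [ae_iff] at h7
      apply measure_mono_null _ h7
      intro z hz
      simp only [Set.mem_setOf_eq]
      exact fun h => absurd (h hz.1) (not_le.2 hz.2)
  -- Stage 3: global nonnegativity
  have NN : M (((Set.Iio (1:ℝ)) ×ˢ V) ∩ {z : ℝ × ℝ | ftil z < 0}) = 0 := by
    have hcover : (((Set.Iio (1:ℝ)) ×ˢ V) ∩ {z : ℝ × ℝ | ftil z < 0}) ⊆
        ⋃ j : ℕ, (Gam b V j ∩ {z : ℝ × ℝ | ftil z < 0}) := by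
      rintro z ⟨⟨hx1, hzV⟩, hzb⟩
      have hv0 := hV0 _ hzV
      obtain ⟨n, hn⟩ := exists_nat_gt (-z.1 * b / z.2)
      refine Set.mem_iUnion.2 ⟨n, mem_Gam hb hzV hv0 ?_ hx1, hzb⟩
      rw [div_lt_iff₀ hv0] at hn
      rw [show -((n:ℝ) * z.2 * b⁻¹) = (-((n:ℝ) * z.2)) / b by field_simp, div_lt_iff₀ hb]
      linarith
    exact measure_mono_null hcover (measure_iUnion_null fun j => NGam j)
  -- Stage 4: a.e. nonnegativity of the shifted function
  set N : Set (ℝ × ℝ) := ((Set.Iio (1:ℝ)) ×ˢ V) ∩ {z : ℝ × ℝ | ftil z < 0} with hN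
  have hNm : MeasurableSet N := ((measurableSet_Iio).prod hVm).inter hbad
  have goal1 : ∀ᵐ z ∂(M.restrict ((Set.Ioo (0:ℝ) 1) ×ˢ V)), 0 ≤ ftil (z.1 - t * z.2, z.2) := by
    have hWm : MeasurableSet (((Set.Ioo (0:ℝ) 1) ×ˢ V) ∩
        {z : ℝ × ℝ | ftil (z.1 - t * z.2, z.2) < 0}) := by
      refine (measurableSet_Ioo.prod hVm).inter ?_
      exact measurableSet_lt (hmf.comp ((measurable_fst.sub
        (measurable_snd.const_mul t)).prodMk measurable_snd)) measurable_const
    have hW : M (((Set.Ioo (0:ℝ) 1) ×ˢ V) ∩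
        {z : ℝ × ℝ | ftil (z.1 - t * z.2, z.2) < 0}) = 0 := by
      rw [hM, Measure.prod_apply_symm hWm]
      have hsl := slice_null ν NN
      have hz : ∀ᵐ v ∂ν, volume ((fun x : ℝ => (x, v)) ⁻¹'
          (((Set.Ioo (0:ℝ) 1) ×ˢ V) ∩ {z : ℝ × ℝ | ftil (z.1 - t * z.2, z.2) < 0})) = 0 := by
        filter_upwards [hsl] with v hv
        by_cases hvV : v ∈ V
        · have hv0 := hV0 _ hvV
          have hsub2 : (fun x : ℝ => (x, v)) ⁻¹'
              (((Set.Ioo (0:ℝ) 1) ×ˢ V) ∩ {z : ℝ × ℝ | ftil (z.1 - t * z.2, z.2) < 0}) ⊆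
              (fun x : ℝ => x + (-(t * v))) ⁻¹' {x : ℝ | (x, v) ∈ N} := by
            rintro x ⟨⟨hx01, -⟩, hxb⟩
            simp only [Set.mem_preimage, Set.mem_setOf_eq, hN]
            have htv : 0 ≤ t * v := mul_nonneg ht (le_of_lt hv0)
            refine ⟨⟨?_, hvV⟩, ?_⟩
            · show x + -(t * v) < 1
              linarith [hx01.2]
            · show ftil (x + -(t * v), v) < 0
              rw [show x + -(t * v) = x - t * v from by ring]
              exact hxb
          apply measure_mono_null hsub2
          obtain ⟨N', hNN', hN'm, hN'0⟩ := exists_measurable_superset_of_null hv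
          apply measure_mono_null (Set.preimage_mono hNN')
          rw [measure_preimage_add_right]
          exact hN'0
        · have : (fun x : ℝ => (x, v)) ⁻¹'
              (((Set.Ioo (0:ℝ) 1) ×ˢ V) ∩ {z : ℝ × ℝ | ftil (z.1 - t * z.2, z.2) < 0}) = ∅ := by
            ext x
            simp [Set.mem_prod, hvV]
          rw [this]
          simp
      calc ∫⁻ v, volume ((fun x : ℝ => (x, v)) ⁻¹'
            (((Set.Ioo (0:ℝ) 1) ×ˢ V) ∩ {z : ℝ × ℝ | ftil (z.1 - t * z.2, z.2) < 0})) ∂ν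
          = ∫⁻ _, 0 ∂ν := lintegral_congr_ae hz
        _ = 0 := lintegral_zero
    rw [ae_restrict_iff' (measurableSet_Ioo.prod hVm), ae_iff]
    apply measure_mono_null _ hW
    intro z hz
    simp only [Set.mem_setOf_eq, not_forall] at hz
    obtain ⟨hz1, hz2⟩ := hz
    exact ⟨hz1, not_le.1 hz2⟩
  refine ⟨goal1, ?_⟩
  -- Stage 5: key identity in ENNReal form
  have hkey : ∀ᵐ z ∂(M.restrict ((Set.Iio (1:ℝ)) ×ˢ V)), z.1 < 0 →
      g z = (∫⁻ w in V, ENNReal.ofReal (p * w * z.2⁻¹ * k w z.2) *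
          g (1 + z.1 * w * z.2⁻¹, w) ∂ν) + ENNReal.ofReal q * g (1 + z.1, z.2) := by
    have H1 := pullback_null ν hVm hV0 hNm NN 1
    have H2 : ∀ᵐ z ∂M, (z.1 + 1, z.2) ∉ N := by
      have h4 := shift_null ν NN 1
      rw [ae_iff]
      simpa using h4
    filter_upwards [hae_bd, ae_restrict_of_ae H1, ae_restrict_of_ae H2,
      ae_restrict_mem (measurableSet_Iio.prod hVm)] with z hz1 hz2 hz3 hz5 hx0
    have hzV : z.2 ∈ V := hz5.2
    have hv0 := hV0 _ hzV
    have hv0' : z.2 ≠ 0 := ne_of_gt hv0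
    obtain ⟨hint, hid⟩ := hz1 (le_of_lt hx0)
    have hellEq : ell p q k ν V z.2 =
        ((ν.restrict V).withDensity
          (fun w => ENNReal.ofReal (p * w * z.2⁻¹ * k w z.2))) +
        (ENNReal.ofReal q) • Measure.dirac z.2 := rfl
    have hnnl : 0 ≤ᵐ[ell p q k ν V z.2] fun w => ftil (1 + z.1 * w * z.2⁻¹, w) := by
      show ∀ᵐ w ∂(ell p q k ν V z.2), 0 ≤ ftil (1 + z.1 * w * z.2⁻¹, w)
      rw [hellEq, ae_add_measure_iff]
      constructor
      · apply (withDensity_absolutelyContinuous (ν.restrict V) _).ae_le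
        filter_upwards [ae_restrict_of_ae hz2, ae_restrict_mem hVm] with w hw hwV
        have hw0 := hV0 _ hwV
        by_contra hneg
        push_neg at hneg
        refine hw hzV hwV ⟨⟨?_, hwV⟩, hneg⟩
        show 1 + z.1 * w * z.2⁻¹ < 1
        have h10 : z.1 * (w * z.2⁻¹) < 0 :=
          mul_neg_of_neg_of_pos hx0 (by positivity)
        have e3 : z.1 * w * z.2⁻¹ = z.1 * (w * z.2⁻¹) := by ring
        linarith
      · have hsetm : MeasurableSet {w : ℝ | ¬ (0:ℝ) ≤ ftil (1 + z.1 * w * z.2⁻¹, w)} := by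
          simp only [not_le]
          exact measurableSet_lt (hmf.comp
            ((((measurable_id.const_mul z.1).mul_const z.2⁻¹).const_add 1).prodMk
              measurable_id)) measurable_const
        rw [ae_iff, Measure.smul_apply, Measure.dirac_apply' _ hsetm,
          Set.indicator_of_notMem]
        · simp
        · simp only [Set.mem_setOf_eq, not_not]
          have hzz : z.1 * z.2 * z.2⁻¹ = z.1 := by field_simp
          rw [hzz]
          by_contra hneg
          push_neg at hneg
          refine hz3 ⟨⟨?_, hzV⟩, ?_⟩
          · show z.1 + 1 < 1
            linarith
          · show ftil (z.1 + 1, z.2) < 0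
            rwa [add_comm]
    have hkv : Measurable fun w : ℝ => k w z.2 :=
      hkm.comp (measurable_id.prodMk measurable_const)
    have hd : Measurable fun w : ℝ => ENNReal.ofReal (p * w * z.2⁻¹ * k w z.2) :=
      ENNReal.measurable_ofReal.comp
        (((measurable_id.const_mul p).mul_const z.2⁻¹).mul hkv)
    have hmh : Measurable fun w : ℝ => ENNReal.ofReal (ftil (1 + z.1 * w * z.2⁻¹, w)) :=
      ENNReal.measurable_ofReal.comp (hmf.comp
        ((((measurable_id.const_mul z.1).mul_const z.2⁻¹).const_add 1).prodMk
          measurable_id))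
    have h6 : ENNReal.ofReal (ftil z) =
        ∫⁻ w, ENNReal.ofReal (ftil (1 + z.1 * w * z.2⁻¹, w)) ∂(ell p q k ν V z.2) := by
      rw [hid]
      exact ofReal_integral_eq_lintegral_ofReal hint hnnl
    show ENNReal.ofReal (ftil z) = _
    rw [h6, hellEq, lintegral_add_measure, lintegral_withDensity_eq_lintegral_mul _ hd hmh,
      lintegral_smul_measure, lintegral_dirac' _ hmh]
    have hzz : z.1 * z.2 * z.2⁻¹ = z.1 := by field_simp
    rw [hzz]
    rfl
  -- define the key quantities
  set C : ℝ → ℝ≥0∞ := fun w => ∫⁻ u in Set.Ioc (1 - t * w) 1, g (u, w) with hC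
  set A : ℝ≥0∞ := ∫⁻ v in V, (∫⁻ x in Set.Ioc (-(t * v)) 0, g (x, v)) ∂ν with hA
  set B : ℝ≥0∞ := ∫⁻ v in V, C v ∂ν with hB
  -- Stage 6: A = B
  have hkv2 : ∀ v : ℝ, Measurable fun w : ℝ => k w v :=
    fun v => hkm.comp (measurable_id.prodMk measurable_const)
  have hCmeas : Measurable C := by
    simp only [hC]
    exact measC hmg (measurable_const.sub (measurable_id.const_mul t)) measurable_const
  have hk_lint : ∀ w ∈ V, (∫⁻ v in V, ENNReal.ofReal (k w v) ∂ν) = 1 := by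
    intro w hw
    have h1 := hk1 w hw
    have hInt : Integrable (fun v => k w v) (ν.restrict V) := by
      by_contra hni
      rw [integral_undef hni] at h1
      norm_num at h1
    have h2 := ofReal_integral_eq_lintegral_ofReal hInt
      (Eventually.of_forall fun v => hknn w v)
    rw [h1, ENNReal.ofReal_one] at h2
    exact h2.symm
  have hAB : A = B := by
    have hkey0 : M ({z : ℝ × ℝ | ¬ (z.1 < 0 →
        g z = (∫⁻ w in V, ENNReal.ofReal (p * w * z.2⁻¹ * k w z.2) *
          g (1 + z.1 * w * z.2⁻¹, w) ∂ν) + ENNReal.ofReal q * g (1 + z.1, z.2))} ∩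
        ((Set.Iio (1:ℝ)) ×ˢ V)) = 0 := by
      have h3 := hkey
      rw [ae_iff] at h3
      rwa [Measure.restrict_apply' (measurableSet_Iio.prod hVm)] at h3
    have hslK := slice_null ν hkey0
    have hinner : ∀ᵐ v ∂(ν.restrict V), (∫⁻ x in Set.Ioc (-(t*v)) 0, g (x,v)) =
        ENNReal.ofReal p * (∫⁻ w in V, ENNReal.ofReal (k w v) * C w ∂ν) +
          ENNReal.ofReal q * C v := by
      filter_upwards [ae_restrict_of_ae hslK, ae_restrict_mem hVm] with v hv hvV
      have hv0 := hV0 _ hvV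
      have hv0' : v ≠ 0 := ne_of_gt hv0
      -- step a : apply the key identity pointwise a.e.
      have hstepa : (∫⁻ x in Set.Ioc (-(t*v)) 0, g (x,v)) =
          ∫⁻ x in Set.Ioc (-(t*v)) 0,
            ((∫⁻ w in V, ENNReal.ofReal (p * w * v⁻¹ * k w v) * g (1 + x*w*v⁻¹, w) ∂ν) +
              ENNReal.ofReal q * g (1+x, v)) := by
        apply lintegral_congr_ae
        have hx0ae : ∀ᵐ x ∂(volume.restrict (Set.Ioc (-(t*v)) 0)), x ≠ 0 := by
          apply ae_restrict_of_ae
          rw [ae_iff]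
          have h4 : {x : ℝ | ¬ x ≠ 0} = {(0:ℝ)} := by ext x; simp
          rw [h4]
          exact measure_singleton 0
        have hslv : ∀ᵐ x ∂(volume.restrict (Set.Ioc (-(t*v)) 0)),
            ¬ ((x, v) ∈ ({z : ℝ × ℝ | ¬ (z.1 < 0 →
              g z = (∫⁻ w in V, ENNReal.ofReal (p * w * z.2⁻¹ * k w z.2) *
                g (1 + z.1 * w * z.2⁻¹, w) ∂ν) + ENNReal.ofReal q * g (1 + z.1, z.2))} ∩
              ((Set.Iio (1:ℝ)) ×ˢ V))) := by
          apply ae_restrict_of_ae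
          rw [ae_iff]
          apply measure_mono_null _ hv
          intro x hx
          rw [Set.mem_setOf_eq, not_not] at hx
          exact hx
        filter_upwards [hx0ae, hslv, ae_restrict_mem measurableSet_Ioc] with x hx1 hx2 hx3
        have hxneg : x < 0 := lt_of_le_of_ne hx3.2 hx1
        have hreg : (x, v) ∈ (Set.Iio (1:ℝ)) ×ˢ V := ⟨show x < 1 by linarith, hvV⟩
        by_cases hPx : (x,v).1 < 0 →
            g (x,v) = (∫⁻ w in V, ENNReal.ofReal (p * w * (x,v).2⁻¹ * k w (x,v).2) *
              g (1 + (x,v).1 * w * (x,v).2⁻¹, w) ∂ν) +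
              ENNReal.ofReal q * g (1 + (x,v).1, (x,v).2)
        · exact hPx hxneg
        · exact absurd ⟨hPx, hreg⟩ hx2
      -- step b : split the sum
      have hFm : Measurable fun zz : ℝ × ℝ =>
          ENNReal.ofReal (p * zz.2 * v⁻¹ * k zz.2 v) * g (1 + zz.1*zz.2*v⁻¹, zz.2) := by
        apply Measurable.fun_mul
        · exact ENNReal.measurable_ofReal.comp
            (((measurable_snd.const_mul p).mul_const v⁻¹).mul
              (hkm.comp (measurable_snd.prodMk measurable_const)))
        · exact hmg.comp ((((measurable_fst.mul measurable_snd).mul_const v⁻¹).const_add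
            1).prodMk measurable_snd)
      have hstepb : (∫⁻ x in Set.Ioc (-(t*v)) 0,
            ((∫⁻ w in V, ENNReal.ofReal (p * w * v⁻¹ * k w v) * g (1 + x*w*v⁻¹, w) ∂ν) +
              ENNReal.ofReal q * g (1+x, v))) =
          (∫⁻ x in Set.Ioc (-(t*v)) 0,
            (∫⁻ w in V, ENNReal.ofReal (p * w * v⁻¹ * k w v) * g (1 + x*w*v⁻¹, w) ∂ν)) +
          ∫⁻ x in Set.Ioc (-(t*v)) 0, ENNReal.ofReal q * g (1+x, v) := by
        apply lintegral_add_left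
        exact Measurable.lintegral_prod_right' (f := fun zz : ℝ × ℝ =>
          ENNReal.ofReal (p * zz.2 * v⁻¹ * k zz.2 v) * g (1 + zz.1*zz.2*v⁻¹, zz.2)) hFm
      -- step c : the q-term
      have hstepc : (∫⁻ x in Set.Ioc (-(t*v)) 0, ENNReal.ofReal q * g (1+x, v)) =
          ENNReal.ofReal q * C v := by
        rw [lintegral_const_mul _ (show Measurable fun x : ℝ => g (1 + x, v) from
          hmg.comp ((measurable_id.const_add 1).prodMk measurable_const))]
        congr 1
        have hpre : (fun x : ℝ => 1 + x * 1) ⁻¹' (Set.Ioc (1 - t*v) 1) =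
            Set.Ioc (-(t*v)) 0 := by
          ext x
          simp only [Set.mem_preimage, Set.mem_Ioc, mul_one]
          constructor
          · rintro ⟨h1, h2⟩; exact ⟨by linarith, by linarith⟩
          · rintro ⟨h1, h2⟩; exact ⟨by linarith, by linarith⟩
        have haff := lintegral_comp_affine (fun u => g (u,v))
          (hmg.comp (measurable_id.prodMk measurable_const)) one_ne_zero 1
          (measurableSet_Ioc (a := 1 - t*v) (b := 1))
        rw [hpre] at haff
        simp only [mul_one, inv_one, abs_one, ENNReal.ofReal_one, one_mul] at haff
        simp only [hC]
        exact haff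
      -- step d : the p-term
      have hstepd : (∫⁻ x in Set.Ioc (-(t*v)) 0,
            (∫⁻ w in V, ENNReal.ofReal (p * w * v⁻¹ * k w v) * g (1 + x*w*v⁻¹, w) ∂ν)) =
          ENNReal.ofReal p * ∫⁻ w in V, ENNReal.ofReal (k w v) * C w ∂ν := by
        rw [lintegral_lintegral_swap hFm.aemeasurable]
        have hwstep : ∀ᵐ w ∂(ν.restrict V),
            (∫⁻ x in Set.Ioc (-(t*v)) 0,
              ENNReal.ofReal (p * w * v⁻¹ * k w v) * g (1 + x*w*v⁻¹, w)) =
            ENNReal.ofReal p * (ENNReal.ofReal (k w v) * C w) := by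
          filter_upwards [ae_restrict_mem hVm] with w hwV
          have hw0 := hV0 _ hwV
          have hw0' : w ≠ 0 := ne_of_gt hw0
          have hm0 : (0:ℝ) < w * v⁻¹ := by positivity
          rw [lintegral_const_mul _ (show Measurable fun x : ℝ => g (1 + x*w*v⁻¹, w) from
            hmg.comp ((((measurable_id.mul_const w).mul_const
            v⁻¹).const_add 1).prodMk measurable_const))]
          have hassoc : (∫⁻ x in Set.Ioc (-(t*v)) 0, g (1 + x*w*v⁻¹, w)) =
              ∫⁻ x in Set.Ioc (-(t*v)) 0, g (1 + x*(w*v⁻¹), w) := by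
            apply lintegral_congr
            intro x
            rw [mul_assoc]
          have hpre : (fun x : ℝ => 1 + x * (w*v⁻¹)) ⁻¹' (Set.Ioc (1 - t*w) 1) =
              Set.Ioc (-(t*v)) 0 := by
            ext x
            simp only [Set.mem_preimage, Set.mem_Ioc]
            have he : -(t*v) * (w*v⁻¹) = -(t*w) := by field_simp
            constructor
            · rintro ⟨h1, h2⟩
              constructor
              · rw [← mul_lt_mul_iff_of_pos_right hm0, he]
                linarith
              · rw [← mul_le_mul_iff_of_pos_right hm0, zero_mul]
                linarith
            · rintro ⟨h1, h2⟩
              have h3 : -(t*w) < x*(w*v⁻¹) := by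
                rw [← he]
                exact (mul_lt_mul_iff_of_pos_right hm0).mpr h1
              have h4 : x*(w*v⁻¹) ≤ 0 := by
                have := mul_nonneg (neg_nonneg.mpr h2) (le_of_lt hm0)
                nlinarith
              exact ⟨by linarith, by linarith⟩
          have haff := lintegral_comp_affine (fun u => g (u,w))
            (hmg.comp (measurable_id.prodMk measurable_const)) (ne_of_gt hm0) 1
            (measurableSet_Ioc (a := 1 - t*w) (b := 1))
          rw [hpre] at haff
          rw [hassoc, haff]
          have habs : |(w*v⁻¹)⁻¹| = v * w⁻¹ := by
            rw [abs_of_pos (by positivity)]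
            field_simp
          simp only [hC]
          rw [habs, ← mul_assoc, ← ENNReal.ofReal_mul
            (mul_nonneg (by positivity) (hknn w v))]
          rw [show p*w*v⁻¹*k w v * (v*w⁻¹) = p * k w v by field_simp]
          rw [ENNReal.ofReal_mul hp, mul_assoc]
        rw [lintegral_congr_ae hwstep]
        rw [lintegral_const_mul _ (show Measurable fun w : ℝ =>
          ENNReal.ofReal (k w v) * C w from
          (ENNReal.measurable_ofReal.comp (hkv2 v)).mul hCmeas)]
      rw [hstepa, hstepb, hstepc, hstepd]
    rw [hA, hB]
    rw [lintegral_congr_ae hinner]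
    have hm1 : Measurable fun v => ∫⁻ w in V, ENNReal.ofReal (k w v) * C w ∂ν := by
      exact Measurable.lintegral_prod_right' (f := fun vw : ℝ × ℝ =>
        ENNReal.ofReal (k vw.2 vw.1) * C vw.2)
        ((ENNReal.measurable_ofReal.comp (hkm.comp (measurable_snd.prodMk
          measurable_fst))).mul (hCmeas.comp measurable_snd))
    have hdone : ∫⁻ v in V, (ENNReal.ofReal p *
          (∫⁻ w in V, ENNReal.ofReal (k w v) * C w ∂ν) + ENNReal.ofReal q * C v) ∂ν =
        ENNReal.ofReal p * (∫⁻ v in V, (∫⁻ w in V, ENNReal.ofReal (k w v) * C w ∂ν) ∂ν) +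
          ENNReal.ofReal q * ∫⁻ v in V, C v ∂ν := by
      rw [lintegral_add_left (hm1.const_mul _), lintegral_const_mul _ hm1,
        lintegral_const_mul _ hCmeas]
    rw [hdone]
    have hswap2 : (∫⁻ v in V, (∫⁻ w in V, ENNReal.ofReal (k w v) * C w ∂ν) ∂ν) =
        ∫⁻ w in V, (∫⁻ v in V, ENNReal.ofReal (k w v) * C w ∂ν) ∂ν :=
      lintegral_lintegral_swap ((ENNReal.measurable_ofReal.comp (hkm.comp
        (measurable_snd.prodMk measurable_fst))).mul (hCmeas.comp measurable_snd)).aemeasurable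
    rw [hswap2]
    have hIn : ∀ᵐ w ∂(ν.restrict V),
        (∫⁻ v in V, ENNReal.ofReal (k w v) * C w ∂ν) = C w := by
      filter_upwards [ae_restrict_mem hVm] with w hwV
      rw [lintegral_mul_const _ (show Measurable fun v : ℝ => ENNReal.ofReal (k w v) from
        ENNReal.measurable_ofReal.comp
        (hkm.comp (measurable_const.prodMk measurable_id))), hk_lint w hwV, one_mul]
    rw [lintegral_congr_ae hIn]
    rw [← add_mul, ← ENNReal.ofReal_add hp hq, hpq1, ENNReal.ofReal_one, one_mul]
  -- Stage 7: B < ∞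
  have hBfin : B ≠ ∞ := by
    set j0 : ℕ := ⌈t * b⌉₊ with hj0
    have htb : t * b ≤ (j0 : ℝ) := Nat.le_ceil _
    have hGm := Gam_measurable (b := b) hVm j0
    have hfin : (∫⁻ z in Gam b V j0, g z ∂M) < ∞ := (hGint j0).lintegral_lt_top
    have hle : B ≤ ∫⁻ z in Gam b V j0, g z ∂M := by
      rw [hB, hM, setLIntegral_prod_eq ν hmg hGm]
      calc ∫⁻ v in V, C v ∂ν
          ≤ ∫⁻ v in V, (∫⁻ x in {x : ℝ | (x, v) ∈ Gam b V j0}, g (x,v)) ∂ν := by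
            apply lintegral_mono_ae
            filter_upwards [ae_restrict_mem hVm] with v hvV
            have hv0 := hV0 _ hvV
            simp only [hC]
            rw [show (∫⁻ u in Set.Ioc (1 - t*v) 1, g (u,v)) =
              ∫⁻ u in Set.Ioo (1 - t*v) 1, g (u,v) from
              (setLIntegral_congr (Ioo_ae_eq_Ioc)).symm]
            apply lintegral_mono_set
            intro x hx
            have htv2 : t*v ≤ (j0:ℝ)*v*b⁻¹ := by
              rw [show (j0:ℝ)*v*b⁻¹ = ((j0:ℝ)*v)/b by ring, le_div_iff₀ hb]
              nlinarith [mul_le_mul_of_nonneg_right htb (le_of_lt hv0)]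
            exact mem_Gam hb hvV hv0 (by linarith [hx.1]) hx.2
        _ ≤ ∫⁻ v, (∫⁻ x in {x : ℝ | (x, v) ∈ Gam b V j0}, g (x,v)) ∂ν :=
            setLIntegral_le_lintegral _ _
    exact ne_of_lt (lt_of_le_of_lt hle hfin)
  -- representation of the shifted lintegral
  have hFrep : ∀ τ : ℝ, (∫⁻ z in (Set.Ioo (0:ℝ) 1) ×ˢ V, g (z.1 - τ * z.2, z.2) ∂M) =
      ∫⁻ v in V, (∫⁻ u in Set.Ioc (-(τ*v)) (1 - τ*v), g (u, v)) ∂ν := by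
    intro τ
    have hmS : Measurable fun z : ℝ × ℝ => g (z.1 - τ * z.2, z.2) :=
      hmg.comp ((measurable_fst.sub (measurable_snd.const_mul τ)).prodMk measurable_snd)
    rw [hM, ← Measure.prod_restrict, lintegral_prod_symm _ hmS.aemeasurable]
    have hin : ∀ v : ℝ, (∫⁻ x in Set.Ioo 0 1, g (x - τ*v, v)) =
        ∫⁻ u in Set.Ioc (-(τ*v)) (1-τ*v), g (u,v) := by
      intro v
      rw [show (∫⁻ x in Set.Ioo 0 1, g (x - τ*v, v)) =
        ∫⁻ x in Set.Ioc 0 1, g (x - τ*v, v) from setLIntegral_congr Ioo_ae_eq_Ioc]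
      have hpre : (fun x : ℝ => -(τ*v) + x * 1) ⁻¹' (Set.Ioc (-(τ*v)) (1-τ*v)) =
          Set.Ioc 0 1 := by
        ext x
        simp only [Set.mem_preimage, Set.mem_Ioc, mul_one]
        constructor
        · rintro ⟨h1, h2⟩; exact ⟨by linarith, by linarith⟩
        · rintro ⟨h1, h2⟩; exact ⟨by linarith, by linarith⟩
      have haff := lintegral_comp_affine (fun u => g (u,v))
        (hmg.comp (measurable_id.prodMk measurable_const)) one_ne_zero (-(τ*v))
        (measurableSet_Ioc (a := -(τ*v)) (b := 1-τ*v))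
      rw [hpre] at haff
      simp only [inv_one, abs_one, ENNReal.ofReal_one, one_mul, mul_one] at haff
      rw [← haff]
      apply lintegral_congr
      intro x
      rw [show x - τ*v = -(τ*v) + x by ring]
    exact lintegral_congr hin
  -- interval additivity
  have hadd : ∀ v ∈ V, (∫⁻ u in Set.Ioc (-(t*v)) (1-t*v), g (u,v)) + C v =
      (∫⁻ u in Set.Ioc (-(t*v)) 0, g (u,v)) + (∫⁻ u in Set.Ioc (0:ℝ) 1, g (u,v)) := by
    intro v hvV
    have hv0 := hV0 _ hvV
    have htv : 0 ≤ t*v := mul_nonneg ht (le_of_lt hv0)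
    have h12 : Set.Ioc (-(t*v)) (1-t*v) ∪ Set.Ioc (1-t*v) 1 = Set.Ioc (-(t*v)) 1 :=
      Set.Ioc_union_Ioc_eq_Ioc (by linarith) (by linarith)
    have h34 : Set.Ioc (-(t*v)) 0 ∪ Set.Ioc (0:ℝ) 1 = Set.Ioc (-(t*v)) 1 :=
      Set.Ioc_union_Ioc_eq_Ioc (by linarith) (by linarith)
    have hd12 : Disjoint (Set.Ioc (-(t*v)) (1-t*v)) (Set.Ioc (1-t*v) 1) := by
      rw [Set.disjoint_left]
      rintro x ⟨_, h2⟩ ⟨h3, _⟩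
      linarith
    have hd34 : Disjoint (Set.Ioc (-(t*v)) 0) (Set.Ioc (0:ℝ) 1) := by
      rw [Set.disjoint_left]
      rintro x ⟨_, h2⟩ ⟨h3, _⟩
      linarith
    simp only [hC]
    rw [← lintegral_union measurableSet_Ioc hd12, ← lintegral_union measurableSet_Ioc hd34,
      h12, h34]
  have hI1meas : Measurable fun v => ∫⁻ u in Set.Ioc (-(t*v)) (1-t*v), g (u,v) :=
    measC hmg ((measurable_id.const_mul t).neg) (measurable_const.sub
      (measurable_id.const_mul t))
  have hI3meas : Measurable fun v => ∫⁻ u in Set.Ioc (-(t*v)) 0, g (u,v) :=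
    measC hmg ((measurable_id.const_mul t).neg) measurable_const
  have hsum : (∫⁻ v in V, (∫⁻ u in Set.Ioc (-(t*v)) (1-t*v), g (u,v)) ∂ν) + B =
      A + ∫⁻ v in V, (∫⁻ u in Set.Ioc (0:ℝ) 1, g (u,v)) ∂ν := by
    rw [hA, hB]
    rw [← lintegral_add_left hI1meas, ← lintegral_add_left hI3meas]
    apply lintegral_congr_ae
    filter_upwards [ae_restrict_mem hVm] with v hvV
    exact hadd v hvV
  have hkeyfin : (∫⁻ v in V, (∫⁻ u in Set.Ioc (-(t*v)) (1-t*v), g (u,v)) ∂ν) =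
      ∫⁻ v in V, (∫⁻ u in Set.Ioc (0:ℝ) 1, g (u,v)) ∂ν := by
    rw [hAB] at hsum
    have h6 : B + (∫⁻ v in V, (∫⁻ u in Set.Ioc (-(t*v)) (1-t*v), g (u,v)) ∂ν) =
        B + ∫⁻ v in V, (∫⁻ u in Set.Ioc (0:ℝ) 1, g (u,v)) ∂ν := by
      rw [add_comm B, hsum, add_comm]
    exact (ENNReal.add_right_inj hBfin).mp h6
  -- final conversions
  have hL : (∫ z in (Set.Ioo (0:ℝ) 1) ×ˢ V, ftil (z.1 - t * z.2, z.2) ∂M) =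
      (∫⁻ z in (Set.Ioo (0:ℝ) 1) ×ˢ V, g (z.1 - t*z.2, z.2) ∂M).toReal := by
    rw [integral_eq_lintegral_of_nonneg_ae goal1 ((hmf.comp ((measurable_fst.sub
      (measurable_snd.const_mul t)).prodMk measurable_snd)).aestronglyMeasurable)]
  have hfeq : ∀ᵐ z ∂(M.restrict ((Set.Ioo (0:ℝ) 1) ×ˢ V)), ftil z = f z := by
    have hsub : ((Set.Ioo (0:ℝ) 1) ×ˢ V) ⊆ (Set.Iio (1:ℝ)) ×ˢ V := fun z hz => ⟨hz.1.2, hz.2⟩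
    have h2 := ae_mono (Measure.restrict_mono hsub le_rfl) hae_eq
    filter_upwards [h2, ae_restrict_mem (measurableSet_Ioo.prod hVm)] with z hz1 hz2
    exact hz1 hz2.1.1
  have hR : (∫ z in (Set.Ioo (0:ℝ) 1) ×ˢ V, f z ∂M) =
      (∫⁻ z in (Set.Ioo (0:ℝ) 1) ×ˢ V, ENNReal.ofReal (f z) ∂M).toReal := by
    rw [integral_eq_lintegral_of_nonneg_ae hfnn hf.1]
  have hR2 : (∫⁻ z in (Set.Ioo (0:ℝ) 1) ×ˢ V, ENNReal.ofReal (f z) ∂M) =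
      ∫⁻ z in (Set.Ioo (0:ℝ) 1) ×ˢ V, g (z.1 - 0 * z.2, z.2) ∂M := by
    apply lintegral_congr_ae
    filter_upwards [hfeq] with z hz
    rw [show z.1 - 0 * z.2 = z.1 by ring]
    show ENNReal.ofReal (f z) = ENNReal.ofReal (ftil (z.1, z.2))
    rw [← hz]
  have h0 : (∫⁻ v in V, (∫⁻ u in Set.Ioc (-(0*v)) (1-0*v), g (u,v)) ∂ν) =
      ∫⁻ v in V, (∫⁻ u in Set.Ioc (0:ℝ) 1, g (u,v)) ∂ν := by
    norm_num
  rw [hL, hR]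
  congr 1
  rw [hFrep t, hR2, hFrep 0, h0]
  exact hkeyfin
end
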